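/- arXiv:1911.05951 — 5 statements merged into one kernel-verified Lean document; each statement's English description precedes it below -/
import Mathlib

section
/- Let G = (V,E) be a directed cactus graph and let (i,j) ∈ E with both i and j of degree greater than one. Define V_j(i→) = {k ∈ V∖{i,j} : there exists a directed path from i to k not passing through j} and V_i(j→) analogously. Then V is the disjoint union of {i,j}, V_j(i→), and V_i(j→). -/
open Matrix Finset

/-- Out-degree of vertex `i` in the digraph with adjacency `A`. -/
def outdeg {n : ℕ} (A : Fin n → Fin n → Bool) (i : Fin n) : ℕ :=
  (Finset.univ.filter (fun j => A i j = true)).card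

/-- In-degree of vertex `i`. -/
def indeg {n : ℕ} (A : Fin n → Fin n → Bool) (i : Fin n) : ℕ :=
  (Finset.univ.filter (fun j => A j i = true)).card

/-- Laplacian matrix of a digraph: diagonal = out-degree, `-1` on edges, `0` otherwise. -/
def lap {n : ℕ} (A : Fin n → Fin n → Bool) : Matrix (Fin n) (Fin n) ℝ :=
  Matrix.of fun i j => if i = j then (outdeg A i : ℝ) else if A i j then -1 else 0

/-- Reachability by directed edges. -/
def Reach {n : ℕ} (A : Fin n → Fin n → Bool) : Fin n → Fin n → Prop :=
  Relation.ReflTransGen (fun a b => A a b = true)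

def StronglyConnected {n : ℕ} (A : Fin n → Fin n → Bool) : Prop := ∀ i j, Reach A i j

def IsBalanced {n : ℕ} (A : Fin n → Fin n → Bool) : Prop := ∀ i, indeg A i = outdeg A i

/-- In-degree of `v` in an edge set `T`. -/
def tIndeg {n : ℕ} (T : Finset (Fin n × Fin n)) (v : Fin n) : ℕ :=
  (T.filter (fun e => e.2 = v)).card

/-- Reachability using only the edges of `T`. -/
def ReachIn {n : ℕ} (T : Finset (Fin n × Fin n)) : Fin n → Fin n → Prop :=
  Relation.ReflTransGen (fun a b => (a, b) ∈ T)

/-- Spanning tree of the digraph rooted at `i` (spanning arborescence, edges directed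
away from `i`): every vertex other than `i` has in-degree 1, `i` has in-degree 0, and
every vertex is reachable from `i` (i.e. the subgraph is connected and acyclic). -/
def IsSpanningTree {n : ℕ} (A : Fin n → Fin n → Bool) (i : Fin n)
    (T : Finset (Fin n × Fin n)) : Prop :=
  (∀ e ∈ T, A e.1 e.2 = true) ∧ tIndeg T i = 0 ∧
    (∀ v, v ≠ i → tIndeg T v = 1) ∧ (∀ v, ReachIn T i v)

/-- Spanning forest with exactly two trees, rooted at `i` and `j`: two vertex-disjoint
arborescences partitioning the vertex set, with roots `i` and `j`. -/
def IsTwoForest {n : ℕ} (A : Fin n → Fin n → Bool) (i j : Fin n)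
    (T : Finset (Fin n × Fin n)) : Prop :=
  (∀ e ∈ T, A e.1 e.2 = true) ∧ tIndeg T i = 0 ∧ tIndeg T j = 0 ∧
    (∀ v, v ≠ i → v ≠ j → tIndeg T v = 1) ∧ (∀ v, ReachIn T i v ∨ ReachIn T j v)

/-- `det L[{i}ᶜ, {i}ᶜ]`: determinant of the principal submatrix deleting row/column `i`. -/
def minor1 {n : ℕ} (L : Matrix (Fin n) (Fin n) ℝ) (i : Fin n) : ℝ :=
  (L.submatrix (fun a : {x : Fin n // x ≠ i} => (a : Fin n))
    (fun a : {x : Fin n // x ≠ i} => (a : Fin n))).det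

/-- `det L[{i,j}ᶜ, {i,j}ᶜ]`: determinant of the principal submatrix deleting rows and
columns `i` and `j`. -/
def minor2 {n : ℕ} (L : Matrix (Fin n) (Fin n) ℝ) (i j : Fin n) : ℝ :=
  (L.submatrix (fun a : {x : Fin n // x ≠ i ∧ x ≠ j} => (a : Fin n))
    (fun a : {x : Fin n // x ≠ i ∧ x ≠ j} => (a : Fin n))).det

/-- `M` is the Moore–Penrose inverse of `L` (the four Penrose equations). -/
def IsMoorePenrose {n : ℕ} (L M : Matrix (Fin n) (Fin n) ℝ) : Prop :=
  L * M * L = L ∧ M * L * M = M ∧ (L * M)ᵀ = L * M ∧ (M * L)ᵀ = M * L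

/-- Resistance `r_{ij} = l†_{ii} + l†_{jj} - 2 l†_{ij}` computed from `M = L†`. -/
def resist {n : ℕ} (M : Matrix (Fin n) (Fin n) ℝ) (i j : Fin n) : ℝ :=
  M i i + M j j - 2 * M i j

/-- Directed path from `i` to `j`: a list of distinct vertices starting at `i`, ending at
`j`, consecutive ones joined by directed edges. -/
def IsPath {n : ℕ} (A : Fin n → Fin n → Bool) (i j : Fin n) (p : List (Fin n)) : Prop :=
  p.Chain' (fun a b => A a b = true) ∧ p.head? = some i ∧ p.getLast? = some j ∧ p.Nodup

/-- `s` is the edge set of a directed cycle of the digraph: the cyclically consecutive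
pairs of a nonempty duplicate-free vertex list, all being directed edges. -/
def IsCycle {n : ℕ} (A : Fin n → Fin n → Bool) (s : Finset (Fin n × Fin n)) : Prop :=
  ∃ c : List (Fin n), 2 ≤ c.length ∧ c.Nodup ∧
    (∀ p ∈ c.zip (c.rotate 1), A p.1 p.2 = true) ∧ s = (c.zip (c.rotate 1)).toFinset

/-- Vertex set of a cycle given by its edge set. -/
def cycVerts {n : ℕ} (s : Finset (Fin n × Fin n)) : Finset (Fin n) := s.image Prod.fst

/-- Directed cactus: strongly connected and every directed edge lies in exactly one
directed cycle. -/
def IsCactus {n : ℕ} (A : Fin n → Fin n → Bool) : Prop :=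
  StronglyConnected A ∧
    ∀ i j : Fin n, A i j = true → ∃! s : Finset (Fin n × Fin n), IsCycle A s ∧ (i, j) ∈ s

/-- Classical distance: length (number of edges) of a shortest directed path. -/
noncomputable def pdist {n : ℕ} (A : Fin n → Fin n → Bool) (i j : Fin n) : ℕ :=
  sInf {m : ℕ | ∃ p : List (Fin n), IsPath A i j p ∧ p.length = m + 1}


section Helpers

variable {n : ℕ} {A : Fin n → Fin n → Bool}

lemma isPath_ne_nil {x y : Fin n} {p : List (Fin n)} (h : IsPath A x y p) : p ≠ [] := by
  rintro rfl; simp [IsPath] at h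

lemma isPath_head_mem {x y : Fin n} {p : List (Fin n)} (h : IsPath A x y p) : x ∈ p :=
  List.mem_of_mem_head? (by rw [h.2.1]; exact rfl)

lemma isPath_last_mem {x y : Fin n} {p : List (Fin n)} (h : IsPath A x y p) : y ∈ p :=
  List.mem_of_mem_getLast? (by rw [h.2.2.1]; exact rfl)

lemma isPath_two_le {x y : Fin n} {p : List (Fin n)} (h : IsPath A x y p) (hxy : x ≠ y) :
    2 ≤ p.length := by
  match p with
  | [] => exact absurd rfl (isPath_ne_nil h)
  | [a] =>
    exfalso
    have h1 : a = x := by have := h.2.1; simpa using this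
    have h2 : a = y := by have := h.2.2.1; simpa using this
    exact hxy (h1 ▸ h2 ▸ rfl)
  | a :: b :: l => simp

/-- prefix of a path up to an occurrence of `t` is a path. -/
lemma isPath_prefix {x z t : Fin n} {s u : List (Fin n)}
    (h : IsPath A x z (s ++ t :: u)) : IsPath A x t (s ++ [t]) := by
  obtain ⟨hc, hh, hl, hn⟩ := h
  refine ⟨?_, ?_, ?_, ?_⟩
  · have : (s ++ [t]) ++ u = s ++ t :: u := by simp
    exact List.IsChain.left_of_append (this ▸ hc)
  · rw [List.head?_append] at hh ⊢
    simpa using hh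
  · exact List.getLast?_concat
  · exact ((List.Sublist.cons₂ t (List.nil_sublist u)).append_left s).nodup hn

/-- suffix of a path starting at an occurrence of `t` is a path. -/
lemma isPath_suffix {x z t : Fin n} {s u : List (Fin n)}
    (h : IsPath A x z (s ++ t :: u)) : IsPath A t z (t :: u) := by
  obtain ⟨hc, hh, hl, hn⟩ := h
  refine ⟨List.IsChain.right_of_append hc, rfl, ?_, hn.sublist (List.sublist_append_right s _)⟩
  rw [List.getLast?_append, List.getLast?_eq_getLast (l := t :: u) (by simp), Option.some_or] at hl
  rw [List.getLast?_eq_getLast (l := t :: u) (by simp)]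
  exact hl

/-- concatenation of paths meeting only at the joint. -/
lemma isPath_append {x y z : Fin n} {p q : List (Fin n)} (hp : IsPath A x y p)
    (hq : IsPath A y z q) (hdisj : ∀ v, v ∈ p → v ∈ q → v = y) :
    IsPath A x z (p ++ q.tail) := by
  obtain ⟨qt, rfl⟩ : ∃ l, q = y :: l := by
    cases q with
    | nil => exact absurd rfl (isPath_ne_nil hq)
    | cons a l =>
      have ha : a = y := by have := hq.2.1; simpa using this
      exact ⟨l, by rw [ha]⟩
  refine ⟨?_, ?_, ?_, ?_⟩
  · change List.IsChain _ _
    rw [List.isChain_append]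
    refine ⟨hp.1, List.IsChain.tail hq.1, ?_⟩
    intro a ha b hb
    have ha' : a = y := by rw [hp.2.2.1] at ha; exact (by simpa using ha : y = a).symm
    subst ha'
    have := (List.isChain_cons.mp hq.1).1
    exact this b hb
  · rw [List.head?_append, hp.2.1, Option.some_or]
  · cases qt with
    | nil =>
      have : y = z := by have := hq.2.2.1; simpa using this
      subst this
      simpa using hp.2.2.1
    | cons b l =>
      rw [List.getLast?_append]
      have hq' := hq.2.2.1
      rw [show (y :: b :: l) = [y] ++ (b :: l) by rfl, List.getLast?_append,
        List.getLast?_eq_getLast (l := b :: l) (by simp), Option.some_or] at hq'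
      simp only [List.tail_cons]
      rw [List.getLast?_eq_getLast (l := b :: l) (by simp), hq', Option.some_or]
  · rw [List.nodup_append]
    refine ⟨hp.2.2.2, (hq.2.2.2).of_cons, ?_⟩
    intro v hv v' hv' hvv
    subst hvv
    have := hdisj v hv (List.mem_cons_of_mem _ hv')
    subst this
    exact (List.nodup_cons.mp hq.2.2.2).1 hv'

/-- extract a simple path from reachability. -/
lemma reach_path {x k : Fin n} (h : Reach A x k) : ∃ p, IsPath A x k p := by
  induction h with
  | refl => exact ⟨[x], List.isChain_singleton x, rfl, rfl, by simp⟩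
  | @tail b c hab hbc ih =>
    obtain ⟨p, hp⟩ := ih
    by_cases hc : c ∈ p
    · obtain ⟨s, u, rfl⟩ := List.append_of_mem hc
      exact ⟨s ++ [c], isPath_prefix hp⟩
    · refine ⟨p ++ [c], ?_, ?_, List.getLast?_concat, ?_⟩
      · change List.IsChain _ _
        rw [List.isChain_append]
        refine ⟨hp.1, List.isChain_singleton c, ?_⟩
        intro a ha b' hb'
        have ha' : a = b := by rw [hp.2.2.1] at ha; exact (by simpa using ha : _ = _).symm
        have hb'' : b' = c := by exact (by simpa using hb' : _ = _).symm
        rw [ha', hb'']; exact hbc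
      · rw [List.head?_append, hp.2.1, Option.some_or]
      · rw [List.nodup_append]
        refine ⟨hp.2.2.2, by simp, fun v hv v' hv' hvv => hc ?_⟩
        have : v = c := by subst hvv; simpa using hv'
        rwa [this] at hv

lemma path_eq_pair {x y : Fin n} {p : List (Fin n)} (hp : IsPath A x y p) (hxy : x ≠ y)
    (hsub : ∀ v ∈ p, v = x ∨ v = y) : p = [x, y] := by
  have hsub' : p ⊆ [x, y] := fun v hv => by rcases hsub v hv with h | h <;> simp [h]
  have hlen : p.length ≤ 2 := by
    simpa using (List.subperm_of_subset hp.2.2.2 hsub').length_le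
  have hlen2 : p.length = 2 := le_antisymm hlen (isPath_two_le hp hxy)
  obtain ⟨a, b, rfl⟩ := List.length_eq_two.mp hlen2
  have ha : a = x := by have := hp.2.1; simpa using this
  have hb : b = y := by have := hp.2.2.1; simpa using this
  rw [ha, hb]

lemma exists_witness {x y : Fin n} {P1 P2 : List (Fin n)} (h1 : IsPath A x y P1)
    (h2 : IsPath A x y P2) (hxy : x ≠ y)
    (hdisj : ∀ v, v ∈ P1 → v ∈ P2 → v = x ∨ v = y) (hne : P1 ≠ P2) :
    (∃ v, v ∈ P1 ∧ v ∉ P2) ∨ (∃ v, v ∈ P2 ∧ v ∉ P1) := by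
  by_contra hcon
  push_neg at hcon
  obtain ⟨hc1, hc2⟩ := hcon
  have e1 : P1 = [x, y] := path_eq_pair h1 hxy (fun v hv => hdisj v hv (hc1 v hv))
  have e2 : P2 = [x, y] := path_eq_pair h2 hxy (fun v hv => hdisj v (hc2 v hv) hv)
  exact hne (e1.trans e2.symm)

lemma zip_rotate_aux' : ∀ (tl : List (Fin n)) (a c : Fin n),
    (a :: tl).zip (tl ++ [c]) =
      (a :: tl).zip tl ++ [((a :: tl).getLast (by simp), c)] := by
  intro tl
  induction tl with
  | nil => intro a c; simp
  | cons b tl2 ih =>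
    intro a c
    simp only [List.zip_cons_cons, List.cons_append]
    rw [ih b c]
    simp [List.getLast_cons]

lemma zip_rotate_aux : ∀ (tl : List (Fin n)) (a : Fin n),
    (a :: tl).zip (tl ++ [a]) =
      (a :: tl).zip tl ++ [((a :: tl).getLast (by simp), a)] :=
  fun tl a => zip_rotate_aux' tl a a

lemma zip_rotate_eq (c : List (Fin n)) (hne : c ≠ []) :
    c.zip (c.rotate 1) = c.zip c.tail ++ [(c.getLast hne, c.head hne)] := by
  obtain ⟨a, tl, rfl⟩ : ∃ a l, c = a :: l := by
    cases c with
    | nil => exact absurd rfl hne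
    | cons a l => exact ⟨a, l, rfl⟩
  rw [List.rotate_cons_succ, List.rotate_zero]
  exact zip_rotate_aux tl a

lemma chain'_forall_zip {R : Fin n → Fin n → Prop} :
    ∀ {c : List (Fin n)}, c.Chain' R → ∀ pr ∈ c.zip c.tail, R pr.1 pr.2 := by
  intro c
  induction c with
  | nil => intro _ pr hpr; simp at hpr
  | cons a tl ih =>
    intro hc pr hpr
    cases tl with
    | nil => simp at hpr
    | cons b tl2 =>
      simp only [List.tail_cons, List.zip_cons_cons, List.mem_cons] at hpr
      rcases hpr with rfl | hpr
      · exact (List.isChain_cons_cons.mp hc).1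
      · exact ih (List.isChain_cons_cons.mp hc).2 pr hpr

lemma isCycle_mk {x y : Fin n} {c : List (Fin n)} (hc : IsPath A x y c) (hxy : x ≠ y)
    (hback : A y x = true) :
    IsCycle A ((c.zip (c.rotate 1)).toFinset) ∧
      (y, x) ∈ (c.zip (c.rotate 1)).toFinset := by
  have hne : c ≠ [] := isPath_ne_nil hc
  have hlast : c.getLast hne = y :=
    Option.some.inj ((List.getLast?_eq_getLast (l := c) hne).symm.trans hc.2.2.1)
  have hhead : c.head hne = x :=
    Option.some.inj ((List.head?_eq_head hne).symm.trans hc.2.1)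
  have hdecomp := zip_rotate_eq c hne
  have hedges : ∀ pr ∈ c.zip (c.rotate 1), A pr.1 pr.2 = true := by
    intro pr hpr
    rw [hdecomp] at hpr
    rcases List.mem_append.mp hpr with h | h
    · exact chain'_forall_zip hc.1 pr h
    · have : pr = (y, x) := by simpa [hlast, hhead] using h
      rw [this]; exact hback
  refine ⟨⟨c, isPath_two_le hc hxy, hc.2.2.2, hedges, rfl⟩, ?_⟩
  rw [List.mem_toFinset, hdecomp]
  simp [hlast, hhead]

lemma image_fst_zip_rotate (c : List (Fin n)) :
    ((c.zip (c.rotate 1)).toFinset.image Prod.fst) = c.toFinset := by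
  ext a
  simp only [Finset.mem_image, List.mem_toFinset]
  have hmap : List.map Prod.fst (c.zip (c.rotate 1)) = c :=
    List.map_fst_zip (by simp)
  constructor
  · rintro ⟨pr, hpr, rfl⟩
    have := List.mem_map_of_mem (f := Prod.fst) hpr
    rwa [hmap] at this
  · intro ha
    have : a ∈ List.map Prod.fst (c.zip (c.rotate 1)) := by rwa [hmap]
    obtain ⟨pr, h1, h2⟩ := List.mem_map.mp this
    exact ⟨pr, h1, h2⟩


/-- Key lemma: in a cactus there is no "theta": two distinct internally disjoint
directed paths from `x` to `y` together with a return path from `y` to `x`. -/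
lemma no_theta (hcact : IsCactus A) :
    ∀ (N : ℕ) (r P1 P2 : List (Fin n)) (x y : Fin n), r.length ≤ N → x ≠ y →
      IsPath A x y P1 → IsPath A x y P2 →
      (∀ v, v ∈ P1 → v ∈ P2 → v = x ∨ v = y) → P1 ≠ P2 →
      IsPath A y x r → False := by
  intro N
  induction N with
  | zero =>
    intro r P1 P2 x y hlen _ _ _ _ _ hr
    have := isPath_ne_nil hr
    cases r with
    | nil => exact this rfl
    | cons a l => simp at hlen
  | succ N ih =>
    intro r P1 P2 x y hlen hxy h1 h2 hdisj hne hr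
    have hx1 : x ∈ P1 := isPath_head_mem h1
    have hx2 : x ∈ P2 := isPath_head_mem h2
    have hy1 : y ∈ P1 := isPath_last_mem h1
    have hy2 : y ∈ P2 := isPath_last_mem h2
    -- r = y :: rt
    obtain ⟨rt, rfl⟩ : ∃ l, r = y :: l := by
      cases r with
      | nil => exact absurd rfl (isPath_ne_nil hr)
      | cons a l =>
        have ha : a = y := by have := hr.2.1; simpa using this
        exact ⟨l, by rw [ha]⟩
    have hynort : y ∉ rt := (List.nodup_cons.mp hr.2.2.2).1
    have hxrt : x ∈ rt := by
      have hx : x ∈ y :: rt := isPath_last_mem hr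
      rcases List.mem_cons.mp hx with h | h
      · exact absurd h hxy
      · exact h
    set pred : Fin n → Bool := fun v => decide (v ∉ P1 ∧ v ∉ P2) with hpred
    set w : List (Fin n) := rt.takeWhile pred with hw_def
    set d : List (Fin n) := rt.dropWhile pred with hd_def
    have hsplit : w ++ d = rt := List.takeWhile_append_dropWhile (p := pred) (l := rt)
    have hw : ∀ v ∈ w, v ∉ P1 ∧ v ∉ P2 := by
      intro v hv
      have := List.mem_takeWhile_imp (hw_def ▸ hv)
      simpa [hpred] using this
    have hd_ne : d ≠ [] := by
      intro h
      have : rt = w := by rw [← hsplit, h, List.append_nil]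
      exact (hw x (this ▸ hxrt)).1 hx1
    set t : Fin n := d.head hd_ne with ht_def
    have ht_pred : pred t = false := List.head_dropWhile_not pred hd_ne
    have htP : t ∈ P1 ∨ t ∈ P2 := by
      have := ht_pred
      simp only [hpred, decide_eq_false_iff_not, not_and_or, not_not] at this
      exact this
    have hd_cons : t :: d.tail = d := List.cons_head_tail hd_ne
    have hr_eq : y :: rt = (y :: w) ++ d := by rw [List.cons_append, hsplit]
    have ht_rt : t ∈ rt := by
      rw [← hsplit]
      exact List.mem_append_right w (ht_def ▸ List.head_mem hd_ne)
    have hty : t ≠ y := fun h => hynort (h ▸ ht_rt)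
    -- the path y :: w, from y to its last element lw
    have hq0_sub : List.Sublist (y :: w) (y :: rt) := by
      rw [hr_eq]; exact List.sublist_append_left _ _
    have hq0_nodup : (y :: w).Nodup := hq0_sub.nodup hr.2.2.2
    have hq0_chain : List.Chain' (fun a b => A a b = true) (y :: w) := by
      have h' := hr.1
      rw [hr_eq] at h'
      exact List.IsChain.left_of_append h'
    set lw : Fin n := (y :: w).getLast (by simp) with hlw_def
    have hq0 : IsPath A y lw (y :: w) :=
      ⟨hq0_chain, rfl, List.getLast?_eq_getLast _, hq0_nodup⟩
    by_cases htx : t = x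
    · -- base case: first return vertex is x; two cycles through the edge (lw, x)
      have hback : A lw x = true := by
        have hc := hr.1
        rw [hr_eq, ← hd_cons, htx] at hc
        change List.IsChain _ _ at hc
        rw [List.isChain_append] at hc
        exact hc.2.2 lw
          (by rw [List.getLast?_eq_getLast (l := y :: w) (by simp)]; rfl) x rfl
      have hd1 : ∀ v, v ∈ P1 → v ∈ y :: w → v = y := by
        intro v hv hv'
        rcases List.mem_cons.mp hv' with h | h
        · exact h
        · exact absurd hv (hw v h).1
      have hd2 : ∀ v, v ∈ P2 → v ∈ y :: w → v = y := by
        intro v hv hv'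
        rcases List.mem_cons.mp hv' with h | h
        · exact h
        · exact absurd hv (hw v h).2
      have hc1path : IsPath A x lw (P1 ++ w) := isPath_append h1 hq0 hd1
      have hc2path : IsPath A x lw (P2 ++ w) := isPath_append h2 hq0 hd2
      have hxlw : x ≠ lw := by
        have hlw_mem : lw ∈ y :: w := hlw_def ▸ List.getLast_mem (by simp)
        rcases List.mem_cons.mp hlw_mem with h | h
        · exact fun he => hxy (he.trans h)
        · exact fun he => (hw lw h).1 (he ▸ hx1)
      have cyc1 := isCycle_mk hc1path hxlw hback
      have cyc2 := isCycle_mk hc2path hxlw hback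
      obtain ⟨s0, _, huniq⟩ := hcact.2 lw x hback
      have e1 := huniq _ ⟨cyc1.1, cyc1.2⟩
      have e2 := huniq _ ⟨cyc2.1, cyc2.2⟩
      have hverts : (P1 ++ w).toFinset = (P2 ++ w).toFinset := by
        rw [← image_fst_zip_rotate (P1 ++ w), ← image_fst_zip_rotate (P2 ++ w), e1, e2]
      rcases exists_witness h1 h2 hxy hdisj hne with ⟨v, hv1, hv2⟩ | ⟨v, hv2, hv1⟩
      · have hvin : v ∈ (P2 ++ w).toFinset := by
          rw [← hverts]; simp [hv1]
        rcases List.mem_append.mp (List.mem_toFinset.mp hvin) with h | h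
        · exact hv2 h
        · exact (hw v h).1 hv1
      · have hvin : v ∈ (P1 ++ w).toFinset := by
          rw [hverts]; simp [hv2]
        rcases List.mem_append.mp (List.mem_toFinset.mp hvin) with h | h
        · exact hv1 h
        · exact (hw v h).2 hv2
    · -- inductive step: shorten the return path
      have hq1_pref : (y :: (w ++ [t])) ++ d.tail = y :: rt := by
        rw [hr_eq, ← hd_cons]; simp
      have hq1_chain : List.Chain' (fun a b => A a b = true) (y :: (w ++ [t])) := by
        have h' := hr.1
        rw [← hq1_pref] at h'
        exact List.IsChain.left_of_append h'
      have hq1_nodup : (y :: (w ++ [t])).Nodup := by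
        have hsub : List.Sublist (y :: (w ++ [t])) (y :: rt) := by
          rw [← hq1_pref]; exact List.sublist_append_left _ _
        exact hsub.nodup hr.2.2.2
      have hq1 : IsPath A y t (y :: (w ++ [t])) := by
        refine ⟨hq1_chain, rfl, ?_, hq1_nodup⟩
        rw [show y :: (w ++ [t]) = (y :: w) ++ [t] by simp]
        exact List.getLast?_concat
      have hd_chain : List.Chain' (fun a b => A a b = true) d := by
        have h' := hr.1; rw [hr_eq] at h'; exact List.IsChain.right_of_append h'
      have hd_last : d.getLast? = some x := by
        have h' := hr.2.2.1
        rw [hr_eq, List.getLast?_append, List.getLast?_eq_getLast (l := d) hd_ne,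
          Option.some_or] at h'
        rw [List.getLast?_eq_getLast (l := d) hd_ne]
        exact h'
      have hrd : IsPath A t x d := by
        refine ⟨hd_chain, ?_, hd_last, ?_⟩
        · rw [← hd_cons]; rfl
        · exact List.Nodup.sublist
            (by rw [hr_eq]; exact List.sublist_append_right _ _) hr.2.2.2
      have hlen_d : d.length ≤ N := by
        have h' : (y :: rt).length ≤ N + 1 := hlen
        rw [hr_eq] at h'
        simp [List.length_append] at h'
        omega
      have main : ∀ Pa Pb : List (Fin n), IsPath A x y Pa → IsPath A x y Pb →
          (∀ v, v ∈ Pa → v ∈ Pb → v = x ∨ v = y) →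
          (∀ v ∈ w, v ∉ Pa ∧ v ∉ Pb) → t ∈ Pa → t ∉ Pb → False := by
        intro Pa Pb hPa hPb hab hwab hta htb
        obtain ⟨s1, u1, hsu⟩ := List.append_of_mem hta
        have hQ1 : IsPath A x t (s1 ++ [t]) := isPath_prefix (hsu ▸ hPa)
        have hyu : y ∈ t :: u1 := by
          have h' := hPa.2.2.1
          rw [hsu, List.getLast?_append, List.getLast?_eq_getLast (l := t :: u1) (by simp),
            Option.some_or] at h'
          have hgy : (t :: u1).getLast (by simp) = y := Option.some.inj h'
          exact hgy ▸ List.getLast_mem (by simp)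
        have hys : y ∉ s1 := by
          have hnd := hPa.2.2.2
          rw [hsu, List.nodup_append] at hnd
          exact fun h => hnd.2.2 y h y hyu rfl
        have hyQ1 : y ∉ s1 ++ [t] := by
          intro h
          rcases List.mem_append.mp h with h | h
          · exact hys h
          · have hyt : y = t := by simpa using h
            exact hty hyt.symm
        have hd2 : ∀ v, v ∈ Pb → v ∈ y :: (w ++ [t]) → v = y := by
          intro v hv hv'
          rcases List.mem_cons.mp hv' with h | h
          · exact h
          · rcases List.mem_append.mp h with h | h
            · exact absurd hv (hwab v h).2
            · have hvt : v = t := by simpa using h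
              exact absurd (hvt ▸ hv) htb
        have hQ2 : IsPath A x t (Pb ++ (w ++ [t])) := isPath_append hPb hq1 hd2
        have hyQ2 : y ∈ Pb ++ (w ++ [t]) := List.mem_append_left _ (isPath_last_mem hPb)
        have hQne : s1 ++ [t] ≠ Pb ++ (w ++ [t]) := fun h => hyQ1 (h ▸ hyQ2)
        have hdisj' : ∀ v, v ∈ s1 ++ [t] → v ∈ Pb ++ (w ++ [t]) → v = x ∨ v = t := by
          intro v hv hv'
          rcases List.mem_append.mp hv with hvs | hvt
          · rcases List.mem_append.mp hv' with hvb | hvw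
            · have hvPa : v ∈ Pa := by rw [hsu]; exact List.mem_append_left _ hvs
              rcases hab v hvPa hvb with h | h
              · exact Or.inl h
              · exact absurd (h ▸ hvs) hys
            · rcases List.mem_append.mp hvw with h | h
              · have hvPa : v ∈ Pa := by rw [hsu]; exact List.mem_append_left _ hvs
                exact absurd hvPa (hwab v h).1
              · exact Or.inr (by simpa using h)
          · exact Or.inr (by simpa using hvt)
        exact ih d (s1 ++ [t]) (Pb ++ (w ++ [t])) x t hlen_d
          (fun h => htx h.symm) hQ1 hQ2 hdisj' hQne hrd
      rcases htP with ht1 | ht2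
      · have htb : t ∉ P2 := by
          intro h
          rcases hdisj t ht1 h with h' | h'
          · exact htx h'
          · exact hty h'
        exact main P1 P2 h1 h2 hdisj (fun v hv => hw v hv) ht1 htb
      · have htb : t ∉ P1 := by
          intro h
          rcases hdisj t h ht2 with h' | h'
          · exact htx h'
          · exact hty h'
        exact main P2 P1 h2 h1 (fun v hv hv' => hdisj v hv' hv)
          (fun v hv => ⟨(hw v hv).2, (hw v hv).1⟩) ht2 htb


end Helpers

/-- if `(i,j)` is an edge of a directed cactus with both endpoints of
degree `> 1`, the vertex set is the disjoint union of `{i,j}`, `V_j(i→)` and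
`V_i(j→)`. -/
theorem stmt_11 {n : ℕ} (A : Fin n → Fin n → Bool) (hA : ∀ i, A i i = false)
    (hcact : IsCactus A) (i j : Fin n) (hedge : A i j = true)
    (hdi : 1 < outdeg A i) (hdj : 1 < outdeg A j) :
    (∀ k : Fin n, k = i ∨ k = j ∨
        (k ≠ i ∧ k ≠ j ∧ ∃ p : List (Fin n), IsPath A i k p ∧ j ∉ p) ∨
        (k ≠ i ∧ k ≠ j ∧ ∃ p : List (Fin n), IsPath A j k p ∧ i ∉ p)) ∧
    (∀ k : Fin n,
        ¬((k ≠ i ∧ k ≠ j ∧ ∃ p : List (Fin n), IsPath A i k p ∧ j ∉ p) ∧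
          (k ≠ i ∧ k ≠ j ∧ ∃ p : List (Fin n), IsPath A j k p ∧ i ∉ p))) := by
  have hij : i ≠ j := by
    intro h
    rw [h, hA j] at hedge
    exact Bool.noConfusion hedge
  constructor
  · -- covering
    intro k
    by_cases hki : k = i
    · exact Or.inl hki
    by_cases hkj : k = j
    · exact Or.inr (Or.inl hkj)
    obtain ⟨p, hp⟩ := reach_path (hcact.1 i k)
    by_cases hjp : j ∈ p
    · obtain ⟨s, u, rfl⟩ := List.append_of_mem hjp
      have hq : IsPath A j k (j :: u) := isPath_suffix hp
      have hiq : i ∉ j :: u := by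
        intro hmem
        cases s with
        | nil =>
          have : j = i := by have := hp.2.1; simpa using this
          exact hij this.symm
        | cons a s' =>
          have hai : a = i := by have := hp.2.1; simpa using this
          have hnd := hp.2.2.2
          rw [List.nodup_append] at hnd
          exact hnd.2.2 i (by rw [← hai]; exact List.mem_cons_self) i hmem rfl
      exact Or.inr (Or.inr (Or.inr ⟨hki, hkj, j :: u, hq, hiq⟩))
    · exact Or.inr (Or.inr (Or.inl ⟨hki, hkj, p, hp, hjp⟩))
  · -- disjointness
    rintro k ⟨⟨hki, hkj, p, hp, hjp⟩, ⟨-, -, q, hq, hiq⟩⟩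
    classical
    set pred2 : Fin n → Bool := fun v => decide (v ∉ p) with hpred2
    set wq : List (Fin n) := q.takeWhile pred2 with hwq_def
    set dq : List (Fin n) := q.dropWhile pred2 with hdq_def
    have hsplit : wq ++ dq = q := List.takeWhile_append_dropWhile (p := pred2) (l := q)
    have hwq : ∀ v ∈ wq, v ∉ p := by
      intro v hv
      have := List.mem_takeWhile_imp (hwq_def ▸ hv)
      simpa [hpred2] using this
    have hdq_ne : dq ≠ [] := by
      intro h
      have hqq : q = wq := by rw [← hsplit, h, List.append_nil]
      exact hwq k (hqq ▸ isPath_last_mem hq) (isPath_last_mem hp)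
    set m : Fin n := dq.head hdq_ne with hm_def
    have hm_pred : pred2 m = false := List.head_dropWhile_not pred2 hdq_ne
    have hm_p : m ∈ p := by
      have := hm_pred
      simp only [hpred2, decide_eq_false_iff_not, not_not] at this
      exact this
    have hsplit' : q = wq ++ m :: dq.tail := by
      rw [← hsplit, List.cons_head_tail hdq_ne]
    have hq' : IsPath A j k (wq ++ m :: dq.tail) := hsplit' ▸ hq
    have hqpref : IsPath A j m (wq ++ [m]) := isPath_prefix hq'
    have hsubq : ∀ v ∈ wq ++ [m], v ∈ q := by
      intro v hv
      rw [hsplit']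
      rcases List.mem_append.mp hv with h | h
      · exact List.mem_append_left _ h
      · have : v = m := by simpa using h
        exact List.mem_append_right _ (this ▸ (List.mem_cons_self : m ∈ m :: dq.tail))
    have hiq' : i ∉ wq ++ [m] := fun h => hiq (hsubq i h)
    have hmq : m ∈ q := hsubq m (List.mem_append_right _ (by simp))
    have hmi : m ≠ i := fun h => hiq (h ▸ hmq)
    -- P1 = i :: (wq ++ [m])
    have hP1 : IsPath A i m (i :: (wq ++ [m])) := by
      refine ⟨?_, rfl, ?_, ?_⟩
      · change List.IsChain _ _
        rw [List.isChain_cons]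
        refine ⟨?_, hqpref.1⟩
        intro b hb
        rw [hqpref.2.1] at hb
        have : j = b := by simpa using hb
        rw [← this]; exact hedge
      · rw [show i :: (wq ++ [m]) = [i] ++ (wq ++ [m]) by rfl, List.getLast?_append,
          hqpref.2.2.1, Option.some_or]
      · exact List.nodup_cons.mpr ⟨hiq', hqpref.2.2.2⟩
    -- P2 = prefix of p up to m
    obtain ⟨s2, u2, hsu2⟩ := List.append_of_mem hm_p
    have hP2 : IsPath A i m (s2 ++ [m]) := isPath_prefix (hsu2 ▸ hp)
    have hsubp : ∀ v ∈ s2 ++ [m], v ∈ p := by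
      intro v hv
      rw [hsu2]
      rcases List.mem_append.mp hv with h | h
      · exact List.mem_append_left _ h
      · have : v = m := by simpa using h
        exact List.mem_append_right _ (this ▸ (List.mem_cons_self : m ∈ m :: u2))
    have hdisj : ∀ v, v ∈ i :: (wq ++ [m]) → v ∈ s2 ++ [m] → v = i ∨ v = m := by
      intro v hv hv'
      rcases List.mem_cons.mp hv with h | h
      · exact Or.inl h
      rcases List.mem_append.mp h with h | h
      · exact absurd (hsubp v hv') (hwq v h)
      · exact Or.inr (by simpa using h)
    have hjP1 : j ∈ i :: (wq ++ [m]) := by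
      have : j ∈ wq ++ [m] := List.mem_of_mem_head? (by rw [hqpref.2.1]; rfl)
      exact List.mem_cons_of_mem _ this
    have hjP2 : j ∉ s2 ++ [m] := fun h => hjp (hsubp j h)
    have hne : i :: (wq ++ [m]) ≠ s2 ++ [m] := fun h => hjP2 (h ▸ hjP1)
    obtain ⟨r, hrr⟩ := reach_path (hcact.1 m i)
    exact no_theta hcact r.length r (i :: (wq ++ [m])) (s2 ++ [m]) i m le_rfl
      hmi.symm hP1 hP2 hdisj hne hrr
end

section
/- Let G be a directed cactus graph and (i,j) a directed edge of G. If k is a vertex such that there exists a directed path from i to k not passing through j, then there also exists a directed path from k to i not passing through j. -/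
open Matrix Finset

private lemma walk_rtg' {α : Type*} {R : α → α → Prop} :
    ∀ (p : List α) {a b : α}, p.Chain' R → p.head? = some a → p.getLast? = some b →
      Relation.ReflTransGen R a b := by
  intro p
  induction p with
  | nil => intro a b _ h; simp at h
  | cons x t ih =>
    intro a b hc hh hl
    simp only [List.head?_cons, Option.some.injEq] at hh
    subst hh
    cases t with
    | nil =>
      simp only [List.getLast?_singleton, Option.some.injEq] at hl
      subst hl; exact Relation.ReflTransGen.refl
    | cons y t' =>
      simp only [List.Chain', List.isChain_cons_cons] at hc
      rw [List.getLast?_cons_cons] at hl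
      exact Relation.ReflTransGen.head hc.1 (ih hc.2 rfl hl)

private lemma rtg_path' {α : Type*} {R : α → α → Prop} {a b : α}
    (h : Relation.ReflTransGen R a b) :
    ∃ p : List α, p.Chain' R ∧ p.head? = some a ∧ p.getLast? = some b ∧ p.Nodup ∧
      ∀ x ∈ p, x = a ∨ ∃ y, R y x := by
  induction h with
  | refl => exact ⟨[a], List.isChain_singleton a, by simp, by simp, by simp, by simp⟩
  | @tail m c hab e ih =>
    obtain ⟨p, hc, hh, hl, hnd, hmem⟩ := ih
    by_cases hcp : c ∈ p
    · obtain ⟨s, t, rfl⟩ := List.append_of_mem hcp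
      have hpre : (s ++ [c]) <+: (s ++ c :: t) := ⟨t, by simp⟩
      refine ⟨s ++ [c], hc.prefix hpre, ?_, List.getLast?_concat, hnd.sublist hpre.sublist,
        fun x hx => hmem x (hpre.subset hx)⟩
      · cases s with
        | nil => simp only [List.nil_append, List.head?_cons, Option.some.injEq] at hh ⊢; exact hh
        | cons z s' => simpa using hh
    · refine ⟨p ++ [c], ?_, ?_, List.getLast?_concat, ?_, ?_⟩
      · simp only [List.Chain', List.isChain_append]
        refine ⟨hc, List.isChain_singleton _, fun x hx y hy => ?_⟩
        simp only [List.head?_cons, Option.mem_def, Option.some.injEq] at hy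
        rw [Option.mem_def, hl] at hx
        cases hx; cases hy; exact e
      · cases p with
        | nil => simp at hh
        | cons z s' => simpa using hh
      · simp only [List.nodup_append, List.nodup_singleton, true_and]
        exact ⟨hnd, fun a ha b hb hab => hcp (by rw [List.mem_singleton] at hb; rw [← hb, ← hab]; exact ha)⟩
      · intro x hx
        rcases List.mem_append.1 hx with h' | h'
        · exact hmem x h'
        · right; exact ⟨m, by simpa using (List.mem_singleton.1 h') ▸ e⟩

private lemma key_mod {L ts te : ℕ} (h : ts ≤ te + L) :
    (ts + (te + L - ts) % L) % L = te % L := by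
  rw [Nat.add_mod_mod, Nat.add_sub_cancel' h, Nat.add_mod_right]

private lemma arith' {L t1 t2 r M : ℕ} (hr : 0 < r) (hrM : r ≤ M) (hM : M < L)
    (h1 : (t1 + r) % L = (t2 + 1) % L) (h2 : (t1 + M) % L = t2 % L) : False := by
  have e1 : (t1 + r) ≡ (t2 + 1) [MOD L] := h1
  have e2 : (t1 + M) ≡ t2 [MOD L] := h2
  have e3 : t1 + (M + 1) ≡ t1 + r [MOD L] := by
    calc t1 + (M + 1) = (t1 + M) + 1 := by omega
      _ ≡ t2 + 1 [MOD L] := e2.add_right 1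
      _ ≡ t1 + r [MOD L] := e1.symm
  have e4 : (M + 1) ≡ r [MOD L] := Nat.ModEq.add_left_cancel' t1 e3
  have e5 : (M + 1) % L = r := by
    have : (M + 1) % L = r % L := e4
    rwa [Nat.mod_eq_of_lt (lt_of_le_of_lt hrM hM)] at this
  rcases Nat.lt_or_ge (M + 1) L with h | h
  · rw [Nat.mod_eq_of_lt h] at e5; omega
  · have hML : M + 1 = L := by omega
    rw [hML, Nat.mod_self] at e5; omega

private lemma mem_zip_rot' {α : Type*} {c : List α} {x y : α} :
    (x, y) ∈ c.zip (c.rotate 1) ↔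
      ∃ (t : ℕ) (ht : t < c.length), x = c.get ⟨t, ht⟩ ∧
        y = c.get ⟨(t + 1) % c.length, Nat.mod_lt _ (Nat.lt_of_le_of_lt (Nat.zero_le _) ht)⟩ := by
  have hlz : (c.zip (c.rotate 1)).length = c.length := by simp
  constructor
  · intro h
    obtain ⟨t, ht, hget⟩ := List.mem_iff_getElem.1 h
    have ht' : t < c.length := hlz ▸ ht
    refine ⟨t, ht', ?_, ?_⟩
    · have h0 := (List.getElem_zip (l := c) (l' := c.rotate 1) (i := t) (h := ht))
      rw [h0] at hget
      simpa using (congrArg Prod.fst hget).symm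
    · have h0 := (List.getElem_zip (l := c) (l' := c.rotate 1) (i := t) (h := ht))
      rw [h0] at hget
      have h2 := (congrArg Prod.snd hget).symm
      simpa [List.getElem_rotate] using h2
  · rintro ⟨t, ht, rfl, rfl⟩
    have ht2 : t < (c.zip (c.rotate 1)).length := hlz ▸ ht
    have hm := List.getElem_mem ht2
    rw [List.getElem_zip, List.getElem_rotate] at hm
    simpa using hm

private lemma cycle_walk' {n : ℕ} {A : Fin n → Fin n → Bool} {c : List (Fin n)}
    (hedge : ∀ p ∈ c.zip (c.rotate 1), A p.1 p.2 = true)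
    {ts te : ℕ} (hts : ts < c.length) (hte : te < c.length) {j : Fin n}
    (hj : ∀ r, 0 < r → r ≤ (te + c.length - ts) % c.length →
      c.get ⟨(ts + r) % c.length, Nat.mod_lt _ (Nat.lt_of_le_of_lt (Nat.zero_le _) hts)⟩ ≠ j) :
    Relation.ReflTransGen (fun a b => A a b = true ∧ b ≠ j) (c.get ⟨ts, hts⟩) (c.get ⟨te, hte⟩) := by
  have hL : 0 < c.length := Nat.lt_of_le_of_lt (Nat.zero_le _) hts
  have aux : ∀ m, m ≤ (te + c.length - ts) % c.length →
      Relation.ReflTransGen (fun a b => A a b = true ∧ b ≠ j) (c.get ⟨ts, hts⟩)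
        (c.get ⟨(ts + m) % c.length, Nat.mod_lt _ hL⟩) := by
    intro m
    induction m with
    | zero =>
      intro _
      have h0 : (⟨(ts + 0) % c.length, Nat.mod_lt _ hL⟩ : Fin c.length) = ⟨ts, hts⟩ :=
        Fin.ext (by simp [Nat.mod_eq_of_lt hts])
      rw [h0]
    | succ m ih =>
      intro hm
      have prev := ih (by omega)
      refine prev.tail ?_
      have hidx : ((ts + m) % c.length + 1) % c.length = (ts + (m + 1)) % c.length := by
        rw [Nat.mod_add_mod, ← Nat.add_assoc]
      constructor
      · have hmem : ((c.get ⟨(ts + m) % c.length, Nat.mod_lt _ hL⟩),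
            (c.get ⟨((ts + m) % c.length + 1) % c.length, Nat.mod_lt _ hL⟩)) ∈
              c.zip (c.rotate 1) :=
          mem_zip_rot'.2 ⟨(ts + m) % c.length, Nat.mod_lt _ hL, rfl, rfl⟩
        have h0 := hedge _ hmem
        simpa only [hidx] using h0
      · have h0 := hj (m + 1) (Nat.succ_pos m) hm
        simpa only [hidx] using h0
  have hfin := aux _ le_rfl
  have heq : (ts + (te + c.length - ts) % c.length) % c.length = te := by
    rw [key_mod (by omega), Nat.mod_eq_of_lt hte]
  simpa only [heq] using hfin

private lemma cycle_in_unique' {α : Type*} {c : List α} (hnd : c.Nodup) {x x' y : α}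
    (h : (x, y) ∈ c.zip (c.rotate 1)) (h' : (x', y) ∈ c.zip (c.rotate 1)) : x = x' := by
  obtain ⟨t, ht, hx, hy⟩ := mem_zip_rot'.1 h
  obtain ⟨t', ht', hx', hy'⟩ := mem_zip_rot'.1 h'
  have hgg : c.get ⟨(t + 1) % c.length, _⟩ = c.get ⟨(t' + 1) % c.length, _⟩ := hy.symm.trans hy'
  have hidx : (t + 1) % c.length = (t' + 1) % c.length :=
    congrArg Fin.val ((List.Nodup.get_inj_iff hnd).1 hgg)
  have hmod : t ≡ t' [MOD c.length] := Nat.ModEq.add_right_cancel' 1 hidx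
  have heq : t = t' := by rwa [Nat.ModEq, Nat.mod_eq_of_lt ht, Nat.mod_eq_of_lt ht'] at hmod
  subst heq
  rw [hx, hx']

private lemma mk_isCycle' {n : ℕ} {A : Fin n → Fin n → Bool} {j : Fin n} {q : List (Fin n)}
    (hq : q ≠ []) (hnd : q.Nodup) (hjq : j ∉ q)
    (hchain : q.Chain' (fun a b => A a b = true))
    {a w : Fin n} (hha : q.head? = some a) (hlw : q.getLast? = some w)
    (hja : A j a = true) (hwj : A w j = true) :
    IsCycle A (((j :: q).zip ((j :: q).rotate 1)).toFinset) ∧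
      (j, a) ∈ (j :: q).zip ((j :: q).rotate 1) ∧
      (w, j) ∈ (j :: q).zip ((j :: q).rotate 1) := by
  set c : List (Fin n) := j :: q with hc
  have hql : 0 < q.length := List.length_pos_iff.2 hq
  have hL : c.length = q.length + 1 := by simp [hc]
  have h2 : 2 ≤ c.length := by omega
  have hcnd : c.Nodup := List.nodup_cons.2 ⟨hjq, hnd⟩
  have hcchain : c.Chain' (fun a b => A a b = true) := by
    simp only [hc, List.Chain', List.isChain_cons]
    exact ⟨fun y hy => by rw [hha] at hy; cases hy; exact hja, hchain⟩
  -- getLast of c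
  have hclast : c.getLast? = some w := by
    rw [hc]
    cases q with
    | nil => exact absurd rfl hq
    | cons z t => rw [List.getLast?_cons_cons]; exact hlw
  have hcne : c ≠ [] := by simp [hc]
  have hlastget : c.get ⟨c.length - 1, by omega⟩ = w := by
    have h1 : c.getLast hcne = w := (List.getLast_eq_iff_getLast?_eq_some hcne).2 hclast
    rw [← h1, List.getLast_eq_getElem]
    simp
  have hheadget : c.get ⟨0, by omega⟩ = j := rfl
  -- all zip pairs are edges
  have hedge : ∀ p ∈ c.zip (c.rotate 1), A p.1 p.2 = true := by
    rintro ⟨x, y⟩ hp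
    obtain ⟨t, ht, hx, hy⟩ := mem_zip_rot'.1 hp
    rcases Nat.lt_or_ge (t + 1) c.length with hlt | hge
    · have hidx : (t + 1) % c.length = t + 1 := Nat.mod_eq_of_lt hlt
      have := List.isChain_iff_getElem.1 hcchain t (by omega)
      simp only [hx, hy]
      have heq : (⟨(t + 1) % c.length, Nat.mod_lt _ (by omega)⟩ : Fin c.length) = ⟨t + 1, hlt⟩ := Fin.ext hidx
      rw [heq]
      exact this
    · have htL : t = c.length - 1 := by omega
      have hidx : (t + 1) % c.length = 0 := by
        have : t + 1 = c.length := by omega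
        rw [this, Nat.mod_self]
      have hx' : x = w := by
        rw [hx, ← hlastget]; congr 1; exact Fin.ext htL
      have hy' : y = j := by
        rw [hy, ← hheadget]; congr 1; exact Fin.ext hidx
      rw [hx', hy']; exact hwj
  refine ⟨⟨c, h2, hcnd, hedge, rfl⟩, ?_, ?_⟩
  · -- (j, a) at index 0
    have h0 : (0 : ℕ) < c.length := by omega
    have hmem := mem_zip_rot'.2 ⟨0, h0, rfl, rfl⟩
    have h1 : (0 + 1) % c.length = 1 := by
      rw [Nat.zero_add, Nat.mod_eq_of_lt (by omega)]
    have hget1 : c.get ⟨(0 + 1) % c.length, Nat.mod_lt _ (Nat.lt_of_le_of_lt (Nat.zero_le _) h0)⟩ = a := by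
      have heq : (⟨(0 + 1) % c.length, Nat.mod_lt _ (by omega)⟩ : Fin c.length) = ⟨1, by omega⟩ := Fin.ext h1
      rw [heq]
      cases q with
      | nil => exact absurd rfl hq
      | cons z t =>
        simp only [List.head?_cons, Option.some.injEq] at hha
        simpa [hc] using hha
    rw [hheadget, hget1] at hmem  -- does hget rewriting work?
    exact hmem
  · -- (w, j) at index c.length - 1
    have hlt : c.length - 1 < c.length := by omega
    have hmem := mem_zip_rot'.2 ⟨c.length - 1, hlt, rfl, rfl⟩
    have h1 : (c.length - 1 + 1) % c.length = 0 := by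
      have : c.length - 1 + 1 = c.length := by omega
      rw [this, Nat.mod_self]
    have hget1 : c.get ⟨(c.length - 1 + 1) % c.length, Nat.mod_lt _ (Nat.lt_of_le_of_lt (Nat.zero_le _) hlt)⟩ = j := by
      have heq : (⟨(c.length - 1 + 1) % c.length, Nat.mod_lt _ (by omega)⟩ : Fin c.length) = ⟨0, by omega⟩ := Fin.ext h1
      rw [heq]; rfl
    rw [hlastget, hget1] at hmem
    exact hmem

/-- in a directed cactus with edge `(i,j)`, if `k` is reachable from `i`
by a directed path avoiding `j`, then `i` is reachable from `k` by a directed path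
avoiding `j`. -/
theorem stmt_12 {n : ℕ} (A : Fin n → Fin n → Bool) (hA : ∀ i, A i i = false)
    (hcact : IsCactus A) (i j k : Fin n) (hedge : A i j = true)
    (hk : ∃ p : List (Fin n), IsPath A i k p ∧ j ∉ p) :
    ∃ q : List (Fin n), IsPath A k i q ∧ j ∉ q := by
  obtain ⟨hsc, huniq⟩ := hcact
  have hij : i ≠ j := by
    intro h; rw [h, hA j] at hedge; exact Bool.false_ne_true hedge
  set R : Fin n → Fin n → Prop := fun a b => A a b = true ∧ b ≠ j with hR
  -- convert the hypothesis path into reachability avoiding j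
  obtain ⟨p, ⟨hpc, hph, hpl, hpnd⟩, hjp⟩ := hk
  have hpcR : p.Chain' R := by
    simp only [List.Chain', List.isChain_iff_getElem] at hpc ⊢
    intro s hs
    exact ⟨hpc s hs, fun hcon => hjp (hcon ▸ List.getElem_mem hs)⟩
  have hik : Relation.ReflTransGen R i k := walk_rtg' p hpcR hph hpl
  have hne : ∀ x, Relation.ReflTransGen R i x → x ≠ j := by
    intro x hx
    induction hx with
    | refl => exact hij
    | tail h e ih => exact e.2
  -- the cycle D through (i,j)
  obtain ⟨sD, ⟨hDcyc, hDmem⟩, hDuniq⟩ := huniq i j hedge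
  obtain ⟨d, hD2, hDnd, hDedge, hDs⟩ := hDcyc
  have hLD : 0 < d.length := by omega
  have hijz : (i, j) ∈ d.zip (d.rotate 1) := List.mem_toFinset.1 (hDs ▸ hDmem)
  obtain ⟨ti, hti, hdi, hdj⟩ := mem_zip_rot'.1 hijz
  set tj := (ti + 1) % d.length with htjdef
  have htj : tj < d.length := Nat.mod_lt _ hLD
  set ta := (tj + 1) % d.length with htadef
  have hta : ta < d.length := Nat.mod_lt _ hLD
  have hjaz : (j, d.get ⟨ta, hta⟩) ∈ d.zip (d.rotate 1) :=
    mem_zip_rot'.2 ⟨tj, htj, hdj, rfl⟩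
  have hja : A j (d.get ⟨ta, hta⟩) = true := hDedge _ hjaz
  have haDj : d.get ⟨ta, hta⟩ ≠ j := by
    intro hcon
    rw [hdj] at hcon
    have h1 : ta = tj := congrArg Fin.val ((List.Nodup.get_inj_iff hDnd).1 hcon)
    have h2 : (tj + 1) % d.length = tj % d.length := by
      rw [← htadef, h1, Nat.mod_eq_of_lt htj]
    have h3 : tj + 1 ≡ tj + 0 [MOD d.length] := h2
    have h4 : (1 : ℕ) ≡ 0 [MOD d.length] := Nat.ModEq.add_left_cancel' tj h3
    have h5 : d.length ∣ 1 := (Nat.modEq_zero_iff_dvd).1 h4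
    have h6 := Nat.le_of_dvd Nat.one_pos h5
    omega
  have hwalkDai : Relation.ReflTransGen R (d.get ⟨ta, hta⟩) (d.get ⟨ti, hti⟩) := by
    refine cycle_walk' hDedge hta hti ?_
    intro r hr hrM hcon
    rw [hdj] at hcon
    have hidx : (ta + r) % d.length = tj :=
      congrArg Fin.val ((List.Nodup.get_inj_iff hDnd).1 hcon)
    exact arith' hr hrM (Nat.mod_lt _ hLD) (by rw [hidx, htjdef]) (key_mod (by omega))
  -- the core claim
  have core : ∀ x, Relation.ReflTransGen R i x → Relation.ReflTransGen R x i := by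
    intro x hx
    induction hx with
    | refl => exact Relation.ReflTransGen.refl
    | @tail b v hib e ih =>
      obtain ⟨hebv, hvj⟩ := e
      obtain ⟨sC, ⟨hCcyc, hCmem⟩, hCuniq⟩ := huniq b v hebv
      obtain ⟨cC, hC2, hCnd, hCedge, hCs⟩ := hCcyc
      have hLC : 0 < cC.length := by omega
      have hbvz : (b, v) ∈ cC.zip (cC.rotate 1) := List.mem_toFinset.1 (hCs ▸ hCmem)
      obtain ⟨tb, htb, hbeq, hveq⟩ := mem_zip_rot'.1 hbvz
      by_cases hjC : j ∈ cC
      · -- hard case : the cycle C contains j; show C = D and walk along D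
        obtain ⟨fj, hjCeq⟩ := List.mem_iff_get.1 hjC
        have htw : (fj + cC.length - 1) % cC.length < cC.length := Nat.mod_lt _ hLC
        set tw := ((fj : ℕ) + cC.length - 1) % cC.length with htwdef
        have htw1 : (tw + 1) % cC.length = (fj : ℕ) := by
          rw [htwdef, Nat.mod_add_mod]
          have he : (fj : ℕ) + cC.length - 1 + 1 = (fj : ℕ) + cC.length := by omega
          rw [he, Nat.add_mod_right, Nat.mod_eq_of_lt fj.isLt]
        have hwjz : (cC.get ⟨tw, htw⟩, j) ∈ cC.zip (cC.rotate 1) := by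
          refine mem_zip_rot'.2 ⟨tw, htw, rfl, ?_⟩
          rw [← hjCeq]
          congr 1
          exact (Fin.ext htw1).symm
        have hwj : A (cC.get ⟨tw, htw⟩) j = true := hCedge _ hwjz
        have hwalkbw : Relation.ReflTransGen R b (cC.get ⟨tw, htw⟩) := by
          have hw := cycle_walk' hCedge htb htw (j := j) ?_
          · rw [hbeq]; exact hw
          · intro r hr hrM hcon
            rw [← hjCeq] at hcon
            have hidx : (tb + r) % cC.length = (fj : ℕ) :=
              congrArg Fin.val ((List.Nodup.get_inj_iff hCnd).1 hcon)
            refine arith' hr hrM (Nat.mod_lt _ hLC) ?_ (key_mod (by omega))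
            rw [hidx]; exact htw1.symm
        have hib' : Relation.ReflTransGen R (d.get ⟨ti, hti⟩) b := by
          rw [← hdi]; exact hib
        have haw : Relation.ReflTransGen R (d.get ⟨ta, hta⟩) (cC.get ⟨tw, htw⟩) :=
          hwalkDai.trans (hib'.trans hwalkbw)
        obtain ⟨qq, hqc, hqh, hql, hqnd, hqmem⟩ := rtg_path' haw
        have hqne : qq ≠ [] := by intro h; rw [h] at hqh; simp at hqh
        have hjqq : j ∉ qq := by
          intro hjin
          rcases hqmem j hjin with h | ⟨y, hy⟩
          · exact haDj h.symm
          · exact hy.2 rfl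
        have hqchainA : qq.Chain' (fun a b => A a b = true) := hqc.imp (fun a b h => h.1)
        obtain ⟨hcycNew, hjaNew, hwjNew⟩ :=
          mk_isCycle' hqne hqnd hjqq hqchainA hqh hql hja hwj
        obtain ⟨sJ, hsJ, hJuniq⟩ := huniq j (d.get ⟨ta, hta⟩) hja
        have hnewD : ((j :: qq).zip ((j :: qq).rotate 1)).toFinset = sD := by
          have e1 := hJuniq _ ⟨hcycNew, List.mem_toFinset.2 hjaNew⟩
          have e2 := hJuniq sD ⟨⟨d, hD2, hDnd, hDedge, hDs⟩, by
            rw [hDs]; exact List.mem_toFinset.2 hjaz⟩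
          rw [e1, ← e2]
        have hwjD : (cC.get ⟨tw, htw⟩, j) ∈ d.zip (d.rotate 1) := by
          have hm : (cC.get ⟨tw, htw⟩, j) ∈ sD := by
            rw [← hnewD]; exact List.mem_toFinset.2 hwjNew
          rw [hDs] at hm; exact List.mem_toFinset.1 hm
        have hwi : cC.get ⟨tw, htw⟩ = i := cycle_in_unique' hDnd hwjD hijz
        have hijC : (i, j) ∈ cC.zip (cC.rotate 1) := by rw [← hwi]; exact hwjz
        have hCD : sC = sD := hDuniq sC ⟨⟨cC, hC2, hCnd, hCedge, hCs⟩, by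
          rw [hCs]; exact List.mem_toFinset.2 hijC⟩
        have hbvd : (b, v) ∈ d.zip (d.rotate 1) := by
          have hm : (b, v) ∈ sD := by rw [← hCD, hCs]; exact List.mem_toFinset.2 hbvz
          rw [hDs] at hm; exact List.mem_toFinset.1 hm
        obtain ⟨tb', htb', hbeq', hveq'⟩ := mem_zip_rot'.1 hbvd
        have hfinal : Relation.ReflTransGen R
            (d.get ⟨(tb' + 1) % d.length, Nat.mod_lt _ hLD⟩) (d.get ⟨ti, hti⟩) := by
          refine cycle_walk' hDedge (Nat.mod_lt _ hLD) hti ?_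
          intro r hr hrM hcon
          rw [hdj] at hcon
          have hidx : ((tb' + 1) % d.length + r) % d.length = (ti + 1) % d.length :=
            congrArg Fin.val ((List.Nodup.get_inj_iff hDnd).1 hcon)
          exact arith' hr hrM (Nat.mod_lt _ hLD) hidx
            (key_mod (le_of_lt (lt_of_lt_of_le (Nat.mod_lt _ hLD) (Nat.le_add_left _ _))))
        rw [hveq', hdi]
        exact hfinal
      · -- easy case : walk around C from v back to b, then use ih
        have hwalk : Relation.ReflTransGen R v b := by
          have hw := cycle_walk' hCedge
            (Nat.mod_lt (tb + 1) hLC) htb (j := j) ?_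
          · rw [hveq, hbeq]; exact hw
          · intro r hr hrM hcon
            exact hjC (hcon ▸ List.get_mem cC _)
        exact hwalk.trans ih
  -- conclude
  obtain ⟨q, hqc, hqh, hql, hqnd, hqmem⟩ := rtg_path' (core k hik)
  refine ⟨q, ⟨hqc.imp (fun a b h => h.1), hqh, hql, hqnd⟩, ?_⟩
  intro hjq
  rcases hqmem j hjq with h | ⟨y, hy⟩
  · exact hne k hik h.symm
  · exact hy.2 rfl
end

section
/- Let G be a directed cactus graph and (i,j) a directed edge of G. Then there is exactly one spanning forest of G consisting of two trees, one rooted at i containing all vertices reachable from i without passing through j, and one rooted at j containing all remaining vertices; equivalently, for each vertex k reachable from i without passing through j, the number of 2-tree spanning forests with roots j and i in which k lies in the tree of i equals 1. -/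
open Matrix Finset

set_option linter.unusedSectionVars false
set_option linter.unusedVariables false
set_option maxHeartbeats 1000000

namespace SF13
variable {α : Type*} [DecidableEq α]

/-- nodup path predicate -/
def NP (R : α → α → Prop) (a b : α) (l : List α) : Prop :=
  l.Chain' R ∧ l.head? = some a ∧ l.getLast? = some b ∧ l.Nodup

theorem exists_np {R : α → α → Prop} {a b : α} (h : Relation.ReflTransGen R a b) :
    ∃ l, NP R a b l := by
  induction h with
  | refl => exact ⟨[a], List.isChain_singleton a, rfl, rfl, List.nodup_singleton a⟩
  | @tail b c h1 h2 ih =>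
    obtain ⟨l, hc, hh, hl, hn⟩ := ih
    by_cases hm : c ∈ l
    · obtain ⟨s, t, rfl⟩ := List.append_of_mem hm
      refine ⟨s ++ [c], hc.prefix ⟨t, by simp⟩, ?_, List.getLast?_concat, ?_⟩
      · cases s with
        | nil => simpa using hh
        | cons x s' => simpa using hh
      · exact (((List.singleton_sublist.mpr (List.mem_cons_self)).append_left s)).nodup hn
    · have hlne : l ≠ [] := by rintro rfl; simp at hh
      refine ⟨l ++ [c], ?_, ?_, List.getLast?_concat, ?_⟩
      · refine List.isChain_append.mpr ⟨hc, List.isChain_singleton c, ?_⟩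
        intro x hx y hy
        simp only [List.head?_cons, Option.mem_def, Option.some.injEq] at hy
        rw [hl] at hx
        simp only [Option.mem_def, Option.some.injEq] at hx
        subst hx; subst hy; exact h2
      · cases l with
        | nil => simp at hh
        | cons x s' => simpa using hh
      · simp [List.nodup_append, hn, hm]; rintro a ha rfl; exact hm ha

/-- cyclic pairs of a list -/
def cp (l : List α) : List (α × α) := l.zip (l.rotate 1)

theorem mem_zip_tail {x y : α} : ∀ {l : List α},
    (x, y) ∈ l.zip l.tail ↔ ∃ l1 l2, l = l1 ++ x :: y :: l2 := by
  intro l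
  induction l with
  | nil => simp
  | cons a t ih =>
    cases t with
    | nil =>
      constructor
      · intro h; simp at h
      · rintro ⟨l1, l2, h⟩
        have := congrArg List.length h
        simp at this; omega
    | cons b t' =>
      constructor
      · intro hm
        simp only [List.tail_cons, List.zip_cons_cons, List.mem_cons] at hm
        rcases hm with h | h
        · obtain ⟨rfl, rfl⟩ := Prod.mk.inj h.symm
          exact ⟨[], t', rfl⟩
        · have h2 : (x, y) ∈ (b :: t').zip (b :: t').tail := by simpa using h
          obtain ⟨l1, l2, heq⟩ := ih.mp h2
          exact ⟨a :: l1, l2, by simp [heq]⟩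
      · rintro ⟨l1, l2, heq⟩
        cases l1 with
        | nil =>
          simp only [List.nil_append, List.cons.injEq] at heq
          obtain ⟨rfl, rfl, rfl⟩ := heq
          simp
        | cons z l1' =>
          simp only [List.cons_append, List.cons.injEq] at heq
          obtain ⟨rfl, heq⟩ := heq
          have h2 : (x, y) ∈ (b :: t').zip (b :: t').tail := by
            rw [ih]; exact ⟨l1', l2, heq⟩
          simp only [List.tail_cons] at h2 ⊢
          simp [List.zip_cons_cons, h2]

theorem cp_cons (a : α) (l : List α) :
    cp (a :: l) = (a :: l).zip l ++ [((a :: l).getLast (by simp), a)] := by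
  have hrot : (a :: l).rotate 1 = l ++ [a] := by
    rw [List.rotate_cons_succ, List.rotate_zero]
  rw [cp, hrot]
  have hd : a :: l = (a :: l).dropLast ++ [(a :: l).getLast (by simp)] :=
    (List.dropLast_append_getLast (by simp)).symm
  have hlen : (a :: l).dropLast.length = l.length := by simp
  have h2 : (a :: l).zip l = (a :: l).dropLast.zip l := by
    have h3 := List.zip_append (l₁ := (a :: l).dropLast)
      (r₁ := [(a :: l).getLast (by simp)]) (l₂ := l) (r₂ := ([] : List α)) hlen
    simpa [← hd] using h3
  calc (a :: l).zip (l ++ [a])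
      = ((a :: l).dropLast ++ [(a :: l).getLast (by simp)]).zip (l ++ [a]) := by rw [← hd]
    _ = (a :: l).dropLast.zip l ++ [((a :: l).getLast (by simp), a)] := by
        rw [List.zip_append hlen]; rfl
    _ = (a :: l).zip l ++ [((a :: l).getLast (by simp), a)] := by rw [h2]

theorem consec_mem_cp {l : List α} {p : α × α} (h : p ∈ l.zip l.tail) : p ∈ cp l := by
  cases l with
  | nil => simp at h
  | cons a t => rw [cp_cons]; exact List.mem_append_left _ (by simpa using h)

theorem wrap_mem_cp {l : List α} (h : l ≠ []) :
    (l.getLast h, l.head h) ∈ cp l := by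
  cases l with
  | nil => simp at h
  | cons a t => rw [cp_cons]; exact List.mem_append_right _ (by simp)

theorem mem_cp_iff {l : List α} (h : l ≠ []) {p : α × α} :
    p ∈ cp l ↔ p ∈ l.zip l.tail ∨ p = (l.getLast h, l.head h) := by
  cases l with
  | nil => simp at h
  | cons a t =>
    rw [cp_cons]
    simp [List.mem_append]

/-- cp commutes with one rotation -/
theorem cp_rotate_one (l : List α) : cp (l.rotate 1) = (cp l).rotate 1 := by
  cases l with
  | nil => simp [cp]
  | cons a t =>
    cases t with
    | nil => simp [cp]
    | cons b t' =>
      have h1 : (a :: b :: t').rotate 1 = b :: (t' ++ [a]) := by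
        rw [List.rotate_cons_succ, List.rotate_zero]; simp
      rw [h1]
      have h2 : (b :: (t' ++ [a])).rotate 1 = t' ++ [a] ++ [b] := by
        rw [List.rotate_cons_succ, List.rotate_zero]
      have h3 : cp (a :: b :: t') = (a, b) :: (b :: t').zip (t' ++ [a]) := by
        rw [cp]
        have : (a :: b :: t').rotate 1 = b :: (t' ++ [a]) := h1
        rw [this]
        simp [List.zip_cons_cons]
      rw [cp, h2, h3]
      have hlen : (b :: t').length = (t' ++ [a]).length := by simp
      have : (b :: (t' ++ [a])).zip (t' ++ [a] ++ [b])
          = (b :: t').zip (t' ++ [a]) ++ [(a, b)] := by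
        have hb : b :: (t' ++ [a]) = (b :: t') ++ [a] := by simp
        rw [hb, List.zip_append hlen]
        simp
      rw [this]
      rw [List.rotate_cons_succ, List.rotate_zero]

theorem cp_rotate (l : List α) (k : ℕ) : ∀ {p : α × α}, p ∈ cp (l.rotate k) ↔ p ∈ cp l := by
  induction k with
  | zero => simp
  | succ m ih =>
    intro p
    have : l.rotate (m + 1) = (l.rotate m).rotate 1 := by
      rw [List.rotate_rotate]
    rw [this, cp_rotate_one]
    rw [← ih (p := p)]
    exact List.mem_rotate (l := cp (l.rotate m)) (n := 1)

theorem chain'_of_mem_zip_tail {R : α → α → Prop} {l : List α} (hc : l.Chain' R)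
    {x y : α} (h : (x, y) ∈ l.zip l.tail) : R x y := by
  obtain ⟨l1, l2, rfl⟩ := mem_zip_tail.mp h
  have := (List.isChain_append.mp hc).2.1
  exact (List.isChain_cons_cons.mp this).1

/-- all cyclic pairs of `l` satisfy `R` if `l ++ [head l]` is an `R`-chain -/
theorem cp_rel {R : α → α → Prop} {l : List α} {x : α} (hh : l.head? = some x)
    (hc : (l ++ [x]).Chain' R) : ∀ p ∈ cp l, R p.1 p.2 := by
  have hne : l ≠ [] := by rintro rfl; simp at hh
  intro p hp
  rcases (mem_cp_iff hne).mp hp with h | h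
  · exact chain'_of_mem_zip_tail (hc.prefix ⟨[x], rfl⟩) (by rw [← Prod.mk.eta (p := p)] at h ⊢; exact h)
  · have hlast : R (l.getLast hne) x := by
      rcases List.isChain_append.mp hc with ⟨-, -, hmid⟩
      exact hmid _ (by rw [List.getLast?_eq_getLast hne]; rfl) x rfl
    have hhd : l.head hne = x := by
      rw [← Option.some_inj, ← List.head?_eq_head]; exact hh
    rw [h, hhd]; exact hlast

theorem exists_in_arc {l : List α} {v : α} (hv : v ∈ l) : ∃ u, (u, v) ∈ cp l := by
  have hv2 : v ∈ l.rotate 1 := (List.mem_rotate).mpr hv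
  obtain ⟨k, hk⟩ := List.mem_iff_get.mp hv2
  have hlen : (l.rotate 1).length = l.length := List.length_rotate l 1
  have hkl : (k : ℕ) < l.length := by rw [← hlen]; exact k.2
  have hcp : (cp l).length = l.length := by
    rw [cp, List.length_zip, hlen, min_self]
  refine ⟨l.get ⟨k, hkl⟩, ?_⟩
  have : (cp l).get ⟨k, by omega⟩ = (l.get ⟨k, hkl⟩, (l.rotate 1).get k) := by
    simp only [cp, List.get_eq_getElem, List.getElem_zip]
  rw [hk] at this
  rw [← this]
  exact List.get_mem _ _

theorem exists_out_arc {l : List α} {v : α} (hv : v ∈ l) : ∃ z, (v, z) ∈ cp l := by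
  obtain ⟨k, hk⟩ := List.mem_iff_get.mp hv
  have hlen : (l.rotate 1).length = l.length := List.length_rotate l 1
  have hkl : (k : ℕ) < (l.rotate 1).length := by rw [hlen]; exact k.2
  have hcp : (cp l).length = l.length := by
    rw [cp, List.length_zip, hlen, min_self]
  refine ⟨(l.rotate 1).get ⟨k, hkl⟩, ?_⟩
  have : (cp l).get ⟨k, by omega⟩ = (l.get k, (l.rotate 1).get ⟨k, hkl⟩) := by
    simp only [cp, List.get_eq_getElem, List.getElem_zip]
  rw [hk] at this
  rw [← this]
  exact List.get_mem _ _

theorem two_mem_count {β : Type*} [DecidableEq β] {l : List β} {a b : β}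
    (ha : a ∈ l) (hb : b ∈ l) (hab : a ≠ b) {v : α} {f : β → α}
    (hfa : f a = v) (hfb : f b = v) : 2 ≤ (l.map f).count v := by
  obtain ⟨s, t, rfl⟩ := List.append_of_mem ha
  have hbst : b ∈ s ∨ b ∈ t := by
    rcases List.mem_append.mp hb with h | h
    · exact Or.inl h
    · rcases List.mem_cons.mp h with h2 | h2
      · exact absurd h2.symm hab
      · exact Or.inr h2
  rcases hbst with h | h
  · obtain ⟨s1, s2, rfl⟩ := List.append_of_mem h
    simp [List.count_append, hfa, hfb, List.count_cons]
    omega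
  · obtain ⟨t1, t2, rfl⟩ := List.append_of_mem h
    simp [List.count_append, hfa, hfb, List.count_cons]
    omega

theorem map_snd_cp {l : List α} : (cp l).map Prod.snd = l.rotate 1 := by
  rw [cp]
  exact List.map_snd_zip (by rw [List.length_rotate])

theorem map_fst_cp {l : List α} : (cp l).map Prod.fst = l := by
  rw [cp]
  exact List.map_fst_zip (by rw [List.length_rotate])

theorem in_arc_unique {l : List α} {v : α} (hc : l.count v ≤ 1) {x y : α}
    (hx : (x, v) ∈ cp l) (hy : (y, v) ∈ cp l) : x = y := by
  by_contra hne
  have h2 : 2 ≤ ((cp l).map Prod.snd).count v :=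
    two_mem_count hx hy (by simp [hne]) rfl rfl
  rw [map_snd_cp] at h2
  have := ((l.rotate_perm 1).count_eq v)
  omega

theorem out_arc_unique {l : List α} {v : α} (hc : l.count v ≤ 1) {x y : α}
    (hx : (v, x) ∈ cp l) (hy : (v, y) ∈ cp l) : x = y := by
  by_contra hne
  have h2 : 2 ≤ ((cp l).map Prod.fst).count v :=
    two_mem_count hx hy (by simp [hne]) rfl rfl
  rw [map_fst_cp] at h2
  omega

theorem first_occ {x : α} : ∀ {w : List α}, x ∈ w → ∃ a t, w = a ++ x :: t ∧ x ∉ a := by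
  intro w
  induction w with
  | nil => simp
  | cons c w' ih =>
    intro h
    by_cases hcx : c = x
    · exact ⟨[], w', by rw [hcx]; rfl, by simp⟩
    · have : x ∈ w' := by
        rcases List.mem_cons.mp h with h1 | h1
        · exact absurd h1.symm hcx
        · exact h1
      obtain ⟨a, t, rfl, hna⟩ := ih this
      exact ⟨c :: a, t, rfl, by simp [hna, Ne.symm hcx]⟩

theorem cp_sub_prefix {x : α} {b r : List α} :
    ∀ p ∈ cp (x :: b), p ∈ cp (x :: b ++ x :: r) := by
  intro p hp
  rcases (mem_cp_iff (by simp) (p := p)).mp hp with h | h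
  · obtain ⟨l1, l2, heq⟩ := mem_zip_tail.mp (by rw [← Prod.mk.eta (p := p)] at h; exact h)
    apply consec_mem_cp
    rw [← Prod.mk.eta (p := p)]
    rw [mem_zip_tail]
    exact ⟨l1, l2 ++ x :: r, by rw [show x :: b ++ x :: r = (x :: b) ++ x :: r from rfl, heq]; simp⟩
  · have hd : x :: b = (x :: b).dropLast ++ [(x :: b).getLast (by simp)] :=
      (List.dropLast_append_getLast (by simp)).symm
    apply consec_mem_cp
    rw [h]
    rw [mem_zip_tail]
    refine ⟨(x :: b).dropLast, r, ?_⟩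
    conv_lhs => rw [show x :: b ++ x :: r = (x :: b) ++ x :: r from rfl, hd]
    simp

theorem getLast_eq_of_concat {l u : List α} {y : α} (h : l = u ++ [y]) (hne : l ≠ []) :
    l.getLast hne = y := by
  have h1 := List.getLast?_concat (a := y) (l := u)
  rw [← h, List.getLast?_eq_getLast hne] at h1
  exact Option.some_inj.mp h1

theorem cp_sub_suffix {x : α} {b o : List α} :
    ∀ p ∈ cp (x :: o), p ∈ cp (x :: b ++ x :: o) := by
  intro p hp
  rcases (mem_cp_iff (by simp) (p := p)).mp hp with h | h
  · obtain ⟨l1, l2, heq⟩ := mem_zip_tail.mp (by rw [← Prod.mk.eta (p := p)] at h; exact h)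
    apply consec_mem_cp
    rw [← Prod.mk.eta (p := p), mem_zip_tail]
    cases l1 with
    | nil =>
      simp only [List.nil_append, List.cons.injEq] at heq
      exact ⟨x :: b, l2, by simp [heq.1, heq.2]⟩
    | cons z l1' =>
      simp only [List.cons_append, List.cons.injEq] at heq
      exact ⟨x :: b ++ x :: l1', l2, by simp [heq.1, heq.2]⟩
  · rcases List.eq_nil_or_concat o with rfl | ⟨o', y, rfl⟩
    · -- o = [], p = (x, x), wrap of whole
      have hw := wrap_mem_cp (l := x :: b ++ [x]) (by simp)
      have hl : (x :: b ++ [x]).getLast (by simp) = x :=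
        getLast_eq_of_concat rfl _
      have hh : (x :: b ++ [x]).head (by simp) = x := rfl
      rw [hl, hh] at hw
      simpa [h] using hw
    · have hw := wrap_mem_cp (l := x :: b ++ x :: (o' ++ [y])) (by simp)
      have hl : (x :: b ++ x :: (o' ++ [y])).getLast (by simp) = y :=
        getLast_eq_of_concat (u := x :: b ++ x :: o') (by simp) _
      have hl2 : (x :: (o' ++ [y])).getLast (by simp) = y :=
        getLast_eq_of_concat (u := x :: o') (by simp) _
      have hh : (x :: b ++ x :: (o' ++ [y])).head (by simp) = x := rfl
      rw [hl, hh] at hw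
      have hco : x :: o'.concat y = x :: (o' ++ [y]) := by simp
      have hl3 : (x :: o'.concat y).getLast (by simp) = y :=
        getLast_eq_of_concat (u := x :: o') (by simp) _
      have hh3 : (x :: o'.concat y).head (by simp) = x := rfl
      rw [h, hl3, hh3]
      have : cp (x :: b ++ x :: o'.concat y) = cp (x :: b ++ x :: (o' ++ [y])) := by rw [hco]
      rw [this]
      exact hw

theorem cycle_extract {v : α} : ∀ (N : ℕ) (w : List α), w.length ≤ N → w ≠ [] →
    w.count v = 1 → ∃ d, d ≠ [] ∧ d.Nodup ∧ v ∈ d ∧ ∀ p ∈ cp d, p ∈ cp w := by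
  intro N
  induction N with
  | zero => intro w hw hne _; simp [List.length_eq_zero_iff] at hw; exact absurd hw hne
  | succ N ih =>
    intro w hw hne hcount
    by_cases hnd : w.Nodup
    · exact ⟨w, hne, hnd, List.count_pos_iff.mp (by omega), fun p hp => hp⟩
    · obtain ⟨x, hx⟩ : ∃ x, 2 ≤ w.count x := by
        by_contra hno
        push_neg at hno
        exact hnd (List.nodup_iff_count_le_one.mpr (fun a => by have := hno a; omega))
      have hxw : x ∈ w := List.count_pos_iff.mp (by omega)
      obtain ⟨a, t, rfl, hxa⟩ := first_occ hxw
      have hxt : x ∈ t := by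
        have : (a ++ x :: t).count x = a.count x + (1 + t.count x) := by
          simp [List.count_append, List.count_cons]; ring
        have ha0 : a.count x = 0 := List.count_eq_zero.mpr hxa
        rw [this, ha0] at hx
        exact List.count_pos_iff.mp (by omega)
      obtain ⟨b, c, rfl⟩ := List.append_of_mem hxt
      -- rotate so that first x is at the front
      set w := a ++ x :: (b ++ x :: c) with hwdef
      have hrot : w.rotate a.length = x :: (b ++ x :: c) ++ a := by
        rw [hwdef, List.rotate_eq_drop_append_take (by simp)]
        simp
      set w' := x :: (b ++ x :: c) ++ a with hw'def
      have hw'eq : w' = x :: b ++ x :: (c ++ a) := by simp [hw'def]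
      have hperm : w'.Perm w := by rw [← hrot]; exact w.rotate_perm a.length
      have hcount' : w'.count v = 1 := by rw [hperm.count_eq]; exact hcount
      have hcpw' : ∀ p ∈ cp w', p ∈ cp w := by
        intro p hp; rw [← hrot] at hp; exact (cp_rotate w a.length).mp hp
      have hlenw' : w'.length = w.length := hperm.length_eq
      by_cases hv : v ∈ x :: b
      · have hc1 : (x :: b).count v = 1 := by
          have hce : w'.count v = (x :: b).count v + (x :: (c ++ a)).count v := by
            rw [hw'eq, List.count_append]
          have h1 : 1 ≤ (x :: b).count v := List.count_pos_iff.mpr hv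
          omega
        have hlen : (x :: b).length ≤ N := by
          have hle : w'.length = (x :: b).length + (x :: (c ++ a)).length := by
            rw [hw'eq, List.length_append]
          have h1 : 1 ≤ (x :: (c ++ a)).length := by simp
          omega
        obtain ⟨d, h1, h2, h3, h4⟩ := ih (x :: b) hlen (by simp) hc1
        exact ⟨d, h1, h2, h3, fun p hp => hcpw' p (hw'eq ▸ cp_sub_prefix p (h4 p hp))⟩
      · have hv' : v ∈ x :: (c ++ a) := by
          have h0 : v ∈ w := List.count_pos_iff.mp (by omega)
          have h2 : v ∈ x :: b ++ x :: (c ++ a) := by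
            rw [← hw'eq]; exact hperm.mem_iff.mpr h0
          rcases List.mem_append.mp h2 with h | h
          · exact absurd h hv
          · exact h
        have hc1 : (x :: (c ++ a)).count v = 1 := by
          have hce : w'.count v = (x :: b).count v + (x :: (c ++ a)).count v := by
            rw [hw'eq, List.count_append]
          have h1 : 1 ≤ (x :: (c ++ a)).count v := List.count_pos_iff.mpr hv'
          omega
        have hlen : (x :: (c ++ a)).length ≤ N := by
          have hle : w'.length = (x :: b).length + (x :: (c ++ a)).length := by
            rw [hw'eq, List.length_append]
          have h1 : 1 ≤ (x :: b).length := by simp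
          omega
        obtain ⟨d, h1, h2, h3, h4⟩ := ih (x :: (c ++ a)) hlen (by simp) hc1
        exact ⟨d, h1, h2, h3, fun p hp => hcpw' p (hw'eq ▸ cp_sub_suffix p (h4 p hp))⟩

theorem head?_append_left {l l' : List α} (h : l ≠ []) : (l ++ l').head? = l.head? := by
  cases l with
  | nil => exact absurd rfl h
  | cons a t => simp

variable {n : ℕ} {A : Fin n → Fin n → Bool}

/-- edge relation -/
def Ed (A : Fin n → Fin n → Bool) : Fin n → Fin n → Prop := fun a b => A a b = true

/-- canonical in-edge predicate relative to root `i` -/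
def Canon (A : Fin n → Fin n → Bool) (i u v : Fin n) : Prop :=
  A u v = true ∧ ∃ l, NP (Ed A) i u l ∧ v ∉ l

theorem eq_dropLast_concat {l : List α} {y : α} (h : l.getLast? = some y) :
    l = l.dropLast ++ [y] := by
  cases l with
  | nil => simp at h
  | cons a t =>
    have hne : (a :: t) ≠ [] := by simp
    have h2 := List.dropLast_append_getLast hne
    rw [List.getLast?_eq_getLast hne] at h
    rw [show (a :: t).getLast hne = y from Option.some_inj.mp h] at h2
    exact h2.symm

theorem canon_unique (hA : ∀ a, A a a = false) (hcact : IsCactus A) {i v : Fin n}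
    (hvi : v ≠ i) {u1 u2 : Fin n} (h1 : Canon A i u1 v) (h2 : Canon A i u2 v) :
    u1 = u2 := by
  obtain ⟨lν, hνc, hνh, hνl, hνn⟩ := exists_np (hcact.1 v i)
  obtain ⟨νt, rfl⟩ : ∃ t, lν = v :: t := by
    cases lν with
    | nil => simp at hνh
    | cons v0 t => exact ⟨t, by rw [show v0 = v from by simpa using hνh]⟩
  cases νt with
  | nil =>
    have : v = i := by simpa using hνl
    exact absurd this hvi
  | cons n1 ν2 =>
    have hvn1 : A v n1 = true := (List.isChain_cons_cons.mp hνc).1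
    have hνtc : (n1 :: ν2).Chain' (Ed A) := (List.isChain_cons_cons.mp hνc).2
    have hνl2 : (n1 :: ν2).getLast? = some i := by
      rw [← List.getLast?_cons_cons (a := v)]; exact hνl
    have hvνt : v ∉ (n1 :: ν2) := (List.nodup_cons.mp hνn).1
    have hsplit : n1 :: ν2 = (n1 :: ν2).dropLast ++ [i] := eq_dropLast_concat hνl2
    set νd := (n1 :: ν2).dropLast with hνddef
    have hvνd : v ∉ νd := fun hc => hvνt ((List.dropLast_sublist (n1 :: ν2)).mem hc)
    -- key construction
    have key : ∀ u : Fin n, A u v = true → (∃ l, NP (Ed A) i u l ∧ v ∉ l) →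
        ∃ d : List (Fin n), d.Nodup ∧ 2 ≤ d.length ∧ (u, v) ∈ cp d ∧ (v, n1) ∈ cp d ∧
          ∀ p ∈ cp d, A p.1 p.2 = true := by
      intro u he hex
      obtain ⟨P, ⟨hPc, hPh, hPl, hPn⟩, hvP⟩ := hex
      have hPne : P ≠ [] := by rintro rfl; simp at hPh
      have hPsplit : P = P.dropLast ++ [u] := eq_dropLast_concat hPl
      set w := P ++ [v] ++ νd with hwdef
      have hwne : w ≠ [] := by simp [hwdef]
      have hwh : w.head? = some i := by
        rw [hwdef, List.append_assoc, head?_append_left hPne]; exact hPh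
      have hcnt : w.count v = 1 := by
        rw [hwdef, List.count_append, List.count_append]
        have c1 : P.count v = 0 := List.count_eq_zero.mpr hvP
        have c2 : νd.count v = 0 := List.count_eq_zero.mpr hvνd
        simp [c1, c2]
      have hchainw : (w ++ [i]).Chain' (Ed A) := by
        have hweq : w ++ [i] = (P ++ [v]) ++ (n1 :: ν2) := by
          rw [hwdef, hνddef]
          conv_rhs => rw [hsplit]
          simp
          exact hνddef.symm
        rw [hweq]
        refine List.isChain_append.mpr ⟨?_, hνtc, ?_⟩
        · refine List.isChain_append.mpr ⟨hPc, List.isChain_singleton v, ?_⟩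
          intro x hx y hy
          simp only [List.head?_cons, Option.mem_def, Option.some.injEq] at hy
          rw [hPl] at hx
          simp only [Option.mem_def, Option.some.injEq] at hx
          subst hx; subst hy; exact he
        · intro x hx y hy
          rw [List.getLast?_concat] at hx
          simp only [Option.mem_def, Option.some.injEq] at hx
          simp only [List.head?_cons, Option.mem_def, Option.some.injEq] at hy
          subst hx; subst hy; exact hvn1
      have hedges : ∀ p ∈ cp w, A p.1 p.2 = true := cp_rel hwh hchainw
      have huv : (u, v) ∈ cp w := by
        apply consec_mem_cp
        rw [mem_zip_tail]
        refine ⟨P.dropLast, νd, ?_⟩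
        rw [hwdef]
        conv_lhs => rw [hPsplit]
        simp
      have hvn1w : (v, n1) ∈ cp w := by
        rcases List.eq_nil_or_concat ν2 with hν2 | ⟨ν2', z, hν2⟩
        · have hn1i : n1 = i := by
            subst hν2; simpa using hνl2
          have hνdnil : νd = [] := by rw [hνddef, hν2]; rfl
          have hw2 : w = P ++ [v] := by rw [hwdef, hνdnil]; simp
          have hlast : w.getLast? = some v := by rw [hw2, List.getLast?_concat]
          have hlast2 : w.getLast hwne = v := by
            rw [List.getLast?_eq_getLast hwne] at hlast
            exact Option.some_inj.mp hlast
          have hhead2 : w.head hwne = i := by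
            have h3 := List.head?_eq_head (l := w) hwne
            rw [hwh] at h3
            exact (Option.some_inj.mp h3).symm
          have := wrap_mem_cp hwne
          rw [hlast2, hhead2] at this
          rw [hn1i]
          exact this
        · have hνdeq : νd = n1 :: ν2.dropLast := by
            rw [hνddef, List.dropLast_cons_of_ne_nil (by rw [hν2]; simp)]
          apply consec_mem_cp
          rw [mem_zip_tail]
          refine ⟨P, ν2.dropLast, ?_⟩
          rw [hwdef, hνdeq]
          simp
      obtain ⟨d, hdne, hdnd, hvd, hsub⟩ :=
        cycle_extract w.length w le_rfl hwne hcnt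
      have hdedges : ∀ p ∈ cp d, A p.1 p.2 = true := fun p hp => hedges p (hsub p hp)
      have hlen2 : 2 ≤ d.length := by
        match d, hdne, hvd with
        | [x], _, hvd =>
          have hx : v = x := by simpa using hvd
          subst hx
          have hm : (v, v) ∈ cp [v] := by simp [cp, List.rotate]
          have := hdedges _ hm
          rw [hA v] at this
          exact absurd this (by simp)
        | (x :: y :: d'), _, _ => simp
      obtain ⟨q, hq⟩ := exists_in_arc hvd
      have hqu : q = u := in_arc_unique (by omega) (hsub _ hq) huv
      subst hqu
      obtain ⟨z, hz⟩ := exists_out_arc hvd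
      have hzn : z = n1 := out_arc_unique (by omega) (hsub _ hz) hvn1w
      subst hzn
      exact ⟨d, hdnd, hlen2, hq, hz, hdedges⟩
    obtain ⟨d1, hn1', hl1, hu1, hx1, he1'⟩ := key u1 h1.1 h1.2
    obtain ⟨d2, hn2', hl2, hu2, hx2, he2'⟩ := key u2 h2.1 h2.2
    have hc1 : IsCycle A ((cp d1).toFinset) := ⟨d1, hl1, hn1', he1', rfl⟩
    have hc2 : IsCycle A ((cp d2).toFinset) := ⟨d2, hl2, hn2', he2', rfl⟩
    obtain ⟨s, -, huniq⟩ := hcact.2 v n1 hvn1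
    have hs1 : (cp d1).toFinset = s := huniq _ ⟨hc1, List.mem_toFinset.mpr hx1⟩
    have hs2 : (cp d2).toFinset = s := huniq _ ⟨hc2, List.mem_toFinset.mpr hx2⟩
    have hu2' : (u2, v) ∈ cp d1 := by
      have hm : (u2, v) ∈ (cp d1).toFinset := by
        rw [hs1, ← hs2]; exact List.mem_toFinset.mpr hu2
      exact List.mem_toFinset.mp hm
    exact in_arc_unique (List.nodup_iff_count_le_one.mp hn1' v) hu1 hu2'

theorem np_peel {i v : Fin n} {l : List (Fin n)} (hnp : NP (Ed A) i v l)
    (hne : l.dropLast ≠ []) :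
    NP (Ed A) i (l.dropLast.getLast hne) l.dropLast ∧
      A (l.dropLast.getLast hne) v = true ∧ v ∉ l.dropLast := by
  obtain ⟨hc, hh, hl, hn⟩ := hnp
  have hsplit : l = l.dropLast ++ [v] := eq_dropLast_concat hl
  have hvd : v ∉ l.dropLast := by
    have := hn
    rw [hsplit, List.nodup_append] at this
    intro hc'
    exact this.2.2 v hc' v (by simp) rfl
  have hedge : A (l.dropLast.getLast hne) v = true := by
    have hc2 : (l.dropLast ++ [v]).Chain' (Ed A) := by rw [← hsplit]; exact hc
    rcases List.isChain_append.mp hc2 with ⟨-, -, hmid⟩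
    exact hmid _ (by rw [List.getLast?_eq_getLast hne]; rfl) v rfl
  refine ⟨⟨?_, ?_, ?_, ?_⟩, hedge, hvd⟩
  · exact hc.prefix ⟨[v], hsplit.symm⟩
  · rw [← head?_append_left (l' := [v]) hne, ← hsplit]; exact hh
  · rw [List.getLast?_eq_getLast hne]
  · exact (List.dropLast_sublist l).nodup hn

open scoped Classical in
/-- the two-forest built from canonical edges -/
noncomputable def T0 (A : Fin n → Fin n → Bool) (i j : Fin n) : Finset (Fin n × Fin n) :=
  Finset.univ.filter (fun e => e.2 ≠ i ∧ e.2 ≠ j ∧ Canon A i e.1 e.2)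

theorem mem_T0 {i j : Fin n} {e : Fin n × Fin n} :
    e ∈ T0 A i j ↔ e.2 ≠ i ∧ e.2 ≠ j ∧ Canon A i e.1 e.2 := by
  classical
  simp [T0]

theorem canon_exists (hcact : IsCactus A) {i v : Fin n} (hvi : v ≠ i) :
    ∃ u, Canon A i u v := by
  obtain ⟨l, hnp⟩ := exists_np (hcact.1 i v)
  have hne : l.dropLast ≠ [] := by
    intro h0
    have hsplit : l = l.dropLast ++ [v] := eq_dropLast_concat hnp.2.2.1
    rw [h0] at hsplit
    simp at hsplit
    rw [hsplit] at hnp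
    have : v = i := by simpa using hnp.2.1
    exact hvi this
  obtain ⟨hnp', hedge, hvd⟩ := np_peel hnp hne
  exact ⟨_, hedge, _, hnp', hvd⟩

theorem tIndeg_T0_root {i j : Fin n} : tIndeg (T0 A i j) i = 0 ∧ tIndeg (T0 A i j) j = 0 := by
  constructor <;>
  · rw [tIndeg, Finset.card_eq_zero, Finset.eq_empty_iff_forall_notMem]
    intro e he
    rw [Finset.mem_filter] at he
    have h2 := mem_T0.mp he.1
    first
      | exact h2.1 he.2
      | exact h2.2.1 he.2

theorem tIndeg_T0_one (hA : ∀ a, A a a = false) (hcact : IsCactus A) {i j v : Fin n}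
    (hvi : v ≠ i) (hvj : v ≠ j) : tIndeg (T0 A i j) v = 1 := by
  obtain ⟨u0, hu0⟩ := canon_exists (A := A) hcact hvi
  rw [tIndeg]
  rw [show (T0 A i j).filter (fun e => e.2 = v) = {(u0, v)} from ?_]
  · exact Finset.card_singleton _
  · ext e
    rw [Finset.mem_filter, mem_T0, Finset.mem_singleton]
    constructor
    · rintro ⟨⟨-, -, hcan⟩, hev⟩
      have : e.1 = u0 := canon_unique hA hcact hvi (hev ▸ hcan) hu0
      rw [← this, ← hev]
    · rintro rfl
      exact ⟨⟨hvi, hvj, hu0⟩, rfl⟩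

/-- main reachability induction -/
theorem reach_T0 (hA : ∀ a, A a a = false) {i j : Fin n} (hedge : A i j = true) :
    ∀ (N : ℕ) (l : List (Fin n)) (v : Fin n), l.length ≤ N → NP (Ed A) i v l →
      (j ∉ l → ReachIn (T0 A i j) i v) ∧
        (ReachIn (T0 A i j) i v ∨ ReachIn (T0 A i j) j v) := by
  intro N
  induction N with
  | zero =>
    intro l v hlen hnp
    have : l ≠ [] := by rintro rfl; simp [NP] at hnp
    have : 0 < l.length := List.length_pos_iff.mpr this
    omega
  | succ N ih =>
    intro l v hlen hnp
    by_cases hd : l.dropLast = []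
    · -- l = [v] and v = i
      have hsplit : l = l.dropLast ++ [v] := eq_dropLast_concat hnp.2.2.1
      rw [hd] at hsplit
      simp at hsplit
      have hvi : v = i := by
        rw [hsplit] at hnp
        simpa using hnp.2.1
      subst hvi
      exact ⟨fun _ => Relation.ReflTransGen.refl, Or.inl Relation.ReflTransGen.refl⟩
    · obtain ⟨hnp', hedge', hvd⟩ := np_peel hnp hd
      set u := l.dropLast.getLast hd with hu
      have hsplit : l = l.dropLast ++ [v] := eq_dropLast_concat hnp.2.2.1
      have hvl : v ∈ l := by rw [hsplit]; simp
      have hvi : v ≠ i := by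
        intro hvi
        subst hvi
        have : v ∈ l.dropLast := by
          have h3 := hnp'.2.1
          cases hdl : l.dropLast with
          | nil => exact absurd hdl hd
          | cons a t =>
            rw [hdl] at h3
            have ha : a = v := by simpa using h3
            rw [← ha]
            exact List.mem_cons_self
        exact hvd this
      have hlen' : l.dropLast.length ≤ N := by
        have h1 : l.length = l.dropLast.length + 1 := by
          rw [hsplit]; simp
        omega
      have hih := ih l.dropLast u hlen' hnp'
      constructor
      · intro hjl
        have hvj : v ≠ j := fun h => hjl (h ▸ hvl)
        have hmem : (u, v) ∈ T0 A i j :=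
          mem_T0.mpr ⟨hvi, hvj, hedge', l.dropLast, hnp', hvd⟩
        have hji : j ∉ l.dropLast := fun h => hjl ((List.dropLast_sublist l).mem h)
        exact (hih.1 hji).tail hmem
      · by_cases hvj : v = j
        · subst hvj
          exact Or.inr Relation.ReflTransGen.refl
        · have hmem : (u, v) ∈ T0 A i j :=
            mem_T0.mpr ⟨hvi, hvj, hedge', l.dropLast, hnp', hvd⟩
          rcases hih.2 with h | h
          · exact Or.inl (h.tail hmem)
          · exact Or.inr (h.tail hmem)

theorem T0_two_forest (hA : ∀ a, A a a = false) (hcact : IsCactus A) {i j : Fin n}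
    (hedge : A i j = true) : IsTwoForest A j i (T0 A i j) := by
  refine ⟨?_, tIndeg_T0_root.2, tIndeg_T0_root.1, ?_, ?_⟩
  · intro e he
    exact (mem_T0.mp he).2.2.1
  · intro v hvj hvi
    exact tIndeg_T0_one hA hcact hvi hvj
  · intro v
    obtain ⟨l, hnp⟩ := exists_np (hcact.1 i v)
    exact (reach_T0 hA hedge l.length l v le_rfl hnp).2.symm

theorem pred_of_mem {l : List α} {v r : α} (hv : v ∈ l) (hh : l.head? = some r)
    (hvr : v ≠ r) : ∃ x, (x, v) ∈ l.zip l.tail := by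
  obtain ⟨l1, l2, rfl⟩ := List.append_of_mem hv
  have hl1 : l1 ≠ [] := by
    rintro rfl
    have : v = r := by simpa using hh
    exact hvr this
  have hsplit : l1 = l1.dropLast ++ [l1.getLast hl1] :=
    (List.dropLast_append_getLast hl1).symm
  refine ⟨l1.getLast hl1, mem_zip_tail.mpr ⟨l1.dropLast, l2, ?_⟩⟩
  conv_lhs => rw [hsplit]
  simp

theorem no_pred_of_last {l : List α} {u v : α} (h : (u, v) ∈ l.zip l.tail)
    (hn : l.Nodup) (hl : l.getLast? = some u) : False := by
  obtain ⟨l1, l2, rfl⟩ := mem_zip_tail.mp h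
  have h2 : (u :: v :: l2).getLast? = some u := by
    rw [← List.getLast?_append_of_ne_nil l1 (by simp)]; exact hl
  have h3 : u ∈ v :: l2 := by
    have h4 : (v :: l2).getLast? = some u := by
      rw [← List.getLast?_append_of_ne_nil [u] (l₂ := v :: l2) (by simp)]
      exact h2
    have h5 : (v :: l2).getLast (by simp) = u := by
      rw [List.getLast?_eq_getLast (by simp)] at h4
      exact Option.some_inj.mp h4
    rw [← h5]
    exact List.getLast_mem _
  have h6 : (u :: v :: l2).Nodup := (List.sublist_append_right l1 _).nodup hn
  exact (List.nodup_cons.mp h6).1 h3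

theorem card_eq_sum_tIndeg (S : Finset (Fin n × Fin n)) :
    S.card = ∑ v : Fin n, tIndeg S v :=
  Finset.card_eq_sum_card_fiberwise (f := Prod.snd) (t := Finset.univ)
    (fun x _ => Finset.mem_univ _)

theorem forest_unique (hA : ∀ a, A a a = false) (hcact : IsCactus A) {i j : Fin n}
    (hedge : A i j = true) {T : Finset (Fin n × Fin n)}
    (hT : IsTwoForest A j i T) : T = T0 A i j := by
  have hij : i ≠ j := by
    intro h
    rw [h] at hedge
    rw [hA j] at hedge
    exact absurd hedge (by simp)
  obtain ⟨hTe, hTj, hTi, hT1, hTr⟩ := hT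
  -- T ⊆ T0
  have hsub : T ⊆ T0 A i j := by
    intro e he
    obtain ⟨u, v⟩ := e
    have hedg : A u v = true := hTe (u, v) he
    have hvj : v ≠ j := by
      intro h
      have hm : (u, v) ∈ T.filter (fun e => e.2 = j) := Finset.mem_filter.mpr ⟨he, h⟩
      rw [tIndeg, Finset.card_eq_zero] at hTj
      rw [hTj] at hm
      simp at hm
    have hvi : v ≠ i := by
      intro h
      have hm : (u, v) ∈ T.filter (fun e => e.2 = i) := Finset.mem_filter.mpr ⟨he, h⟩
      rw [tIndeg, Finset.card_eq_zero] at hTi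
      rw [hTi] at hm
      simp at hm
    -- no vertex of a nodup T-path ending at u can be v
    have hnov : ∀ (r : Fin n) (l : List (Fin n)), r ≠ v →
        NP (fun a b => (a, b) ∈ T) r u l → v ∉ l := by
      intro r l hrv hnp hvl
      obtain ⟨x, hx⟩ := pred_of_mem hvl hnp.2.1 (Ne.symm hrv)
      have hxT : (x, v) ∈ T := chain'_of_mem_zip_tail hnp.1 hx
      have hxu : x = u := by
        have hc1 := hT1 v hvj hvi
        rw [tIndeg] at hc1
        have := Finset.card_le_one.mp (le_of_eq hc1) (x, v)
          (Finset.mem_filter.mpr ⟨hxT, rfl⟩) (u, v) (Finset.mem_filter.mpr ⟨he, rfl⟩)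
        exact (Prod.mk.inj this).1
      subst hxu
      exact no_pred_of_last hx hnp.2.2.2 hnp.2.2.1
    rcases hTr u with hru | hru
    · -- reach from j
      obtain ⟨l, hnp⟩ := exists_np hru
      have hvl : v ∉ l := hnov j l (Ne.symm hvj) hnp
      have hil : i ∉ l := by
        intro hil
        obtain ⟨x, hx⟩ := pred_of_mem hil hnp.2.1 hij
        have hxT : (x, i) ∈ T := chain'_of_mem_zip_tail hnp.1 hx
        have hm : (x, i) ∈ T.filter (fun e => e.2 = i) := Finset.mem_filter.mpr ⟨hxT, rfl⟩
        rw [tIndeg, Finset.card_eq_zero] at hTi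
        rw [hTi] at hm
        simp at hm
      have hlne : l ≠ [] := by rintro rfl; simp [NP] at hnp
      have hnp2 : NP (Ed A) i u (i :: l) := by
        refine ⟨?_, by simp, ?_, ?_⟩
        · refine List.isChain_cons.mpr ?_
          refine ⟨?_, hnp.1.imp (fun a b hab => hTe (a, b) hab)⟩
          intro y hy
          rw [hnp.2.1] at hy
          simp only [Option.mem_def, Option.some.injEq] at hy
          subst hy
          exact hedge
        · cases l with
          | nil => exact absurd rfl hlne
          | cons a t => rw [List.getLast?_cons_cons]; exact hnp.2.2.1
        · exact List.nodup_cons.mpr ⟨hil, hnp.2.2.2⟩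
      exact mem_T0.mpr ⟨hvi, hvj, hedg, i :: l, hnp2,
        fun hc => by rcases List.mem_cons.mp hc with h | h; exacts [hvi h, hvl h]⟩
    · -- reach from i
      obtain ⟨l, hnp⟩ := exists_np hru
      have hvl : v ∉ l := hnov i l (Ne.symm hvi) hnp
      have hnp2 : NP (Ed A) i u l :=
        ⟨hnp.1.imp (fun a b hab => hTe (a, b) hab), hnp.2.1, hnp.2.2.1, hnp.2.2.2⟩
      exact mem_T0.mpr ⟨hvi, hvj, hedg, l, hnp2, hvl⟩
  -- cardinalities agree
  have hcard : (T0 A i j).card ≤ T.card := by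
    rw [card_eq_sum_tIndeg, card_eq_sum_tIndeg]
    apply le_of_eq
    apply Finset.sum_congr rfl
    intro v _
    by_cases hvi : v = i
    · subst hvi; rw [tIndeg_T0_root.1, hTi]
    · by_cases hvj : v = j
      · subst hvj; rw [tIndeg_T0_root.2, hTj]
      · rw [tIndeg_T0_one hA hcact hvi hvj, hT1 v hvj hvi]
  exact Finset.eq_of_subset_of_card_le hsub hcard

end SF13

set_option maxHeartbeats 1000000 in
/-- in a directed cactus with edge `(i,j)`, for each vertex `k`
reachable from `i` without passing through `j`, there is exactly one 2-tree spanning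
forest with roots `j` and `i` in which `k` lies in the tree rooted at `i`. -/
theorem stmt_13 {n : ℕ} (A : Fin n → Fin n → Bool) (hA : ∀ i, A i i = false)
    (hcact : IsCactus A) (i j : Fin n) (hedge : A i j = true) :
    ∀ k : Fin n, (∃ p : List (Fin n), IsPath A i k p ∧ j ∉ p) →
      Set.ncard {T : Finset (Fin n × Fin n) |
        IsTwoForest A j i T ∧ ReachIn T i k} = 1 := by
  intro k hk
  have hset : {T : Finset (Fin n × Fin n) | IsTwoForest A j i T ∧ ReachIn T i k}
      = {SF13.T0 A i j} := by
    ext T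
    simp only [Set.mem_setOf_eq, Set.mem_singleton_iff]
    constructor
    · rintro ⟨h1, -⟩
      exact SF13.forest_unique hA hcact hedge h1
    · rintro rfl
      refine ⟨SF13.T0_two_forest hA hcact hedge, ?_⟩
      obtain ⟨p, hp, hjp⟩ := hk
      exact (SF13.reach_T0 hA hedge p.length p k le_rfl
        ⟨hp.1, hp.2.1, hp.2.2.1, hp.2.2.2⟩).1 hjp
  rw [hset]
  exact Set.ncard_singleton _
end

section
/- Let G be a strongly connected balanced digraph with Laplacian L and resistance r_{ij} = l†_{ii} + l†_{jj} − 2 l†_{ij}. If (i,j) is a directed edge of G and either i or j has degree one (in-degree = out-degree = 1), then r_{ij} ≤ 1. -/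
open Matrix Finset

section aux
variable {n : ℕ}

lemma lap_apply (A : Fin n → Fin n → Bool) (hA : ∀ i, A i i = false) (v w : Fin n) :
    lap A v w = (if v = w then (outdeg A v : ℝ) else 0) + (if A v w = true then -1 else 0) := by
  by_cases h : v = w
  · subst h; simp [lap, hA v]
  · simp [lap, h]

lemma lap_comb (A : Fin n → Fin n → Bool) (hA : ∀ i, A i i = false) (v : Fin n) (g : Fin n → ℝ) :
    ∑ w, lap A v w * g w
      = (outdeg A v : ℝ) * g v - ∑ w ∈ univ.filter (fun w => A v w = true), g w := by
  simp only [lap_apply A hA, add_mul, ite_mul, zero_mul, neg_one_mul]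
  rw [Finset.sum_add_distrib, Finset.sum_ite_eq univ v (fun w => (outdeg A v : ℝ) * g w)]
  simp only [Finset.mem_univ, if_true]
  have h2 : ∑ x : Fin n, (if A v x = true then -g x else 0)
      = ∑ w ∈ univ.filter (fun w => A v w = true), -g w := by
    rw [Finset.sum_filter]
  rw [h2, Finset.sum_neg_distrib]
  ring

lemma lap_row_sum (A : Fin n → Fin n → Bool) (hA : ∀ i, A i i = false) (v : Fin n) :
    ∑ w, lap A v w = 0 := by
  have := lap_comb A hA v (fun _ => 1)
  simp only [mul_one, Finset.sum_const, nsmul_eq_mul] at this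
  simpa [outdeg] using this

lemma lap_col_sum (A : Fin n → Fin n → Bool) (hA : ∀ i, A i i = false)
    (hbal : ∀ i, indeg A i = outdeg A i) (w : Fin n) :
    ∑ v, lap A v w = 0 := by
  have : ∀ v, lap A v w = (if v = w then (outdeg A w : ℝ) else 0) + (if A v w = true then -1 else 0) := by
    intro v
    rw [lap_apply A hA]
    by_cases h : v = w <;> simp [h]
  rw [Finset.sum_congr rfl (fun v _ => this v), Finset.sum_add_distrib]
  rw [Finset.sum_ite_eq' univ w (fun _ => (outdeg A w : ℝ))]
  simp only [Finset.mem_univ, if_true]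
  have h2 : ∑ v, (if A v w = true then (-1:ℝ) else 0) = -(indeg A w : ℝ) := by
    rw [← Finset.sum_filter]
    simp [indeg]
  rw [h2, hbal w]
  ring

lemma max_principle (A : Fin n → Fin n → Bool) (hA : ∀ i, A i i = false)
    (i : Fin n) (g : Fin n → ℝ)
    (hg : ∀ v, v ≠ i → ∑ w, lap A v w * g w < 0) :
    ∀ v, g v ≤ g i := by
  obtain ⟨v₀, -, hmax⟩ := Finset.exists_max_image univ g ⟨i, Finset.mem_univ i⟩
  have hv₀ : v₀ = i := by
    by_contra hne
    have h1 := hg v₀ hne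
    rw [lap_comb A hA] at h1
    have h2 : ∑ w ∈ univ.filter (fun w => A v₀ w = true), g w
        ≤ (univ.filter (fun w => A v₀ w = true)).card • g v₀ :=
      Finset.sum_le_card_nsmul _ _ _ (fun w _ => hmax w (Finset.mem_univ w))
    rw [nsmul_eq_mul] at h2
    have : ((univ.filter (fun w => A v₀ w = true)).card : ℝ) = (outdeg A v₀ : ℝ) := by rfl
    rw [this] at h2
    linarith
  intro v
  exact hv₀ ▸ hmax v (Finset.mem_univ v)

lemma ker_const (A : Fin n → Fin n → Bool) (hA : ∀ i, A i i = false)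
    (hsc : ∀ i j, Relation.ReflTransGen (fun a b => A a b = true) i j)
    (x : Fin n → ℝ) (hx : ∀ v, ∑ w, lap A v w * x w = 0) :
    ∀ v w, x v = x w := by
  intro v w
  obtain ⟨v₀, -, hmax⟩ := Finset.exists_max_image univ x ⟨v, Finset.mem_univ v⟩
  have step : ∀ a b, x a = x v₀ → A a b = true → x b = x v₀ := by
    intro a b ha hab
    have hsum := hx a
    rw [lap_comb A hA] at hsum
    have hcard : ((univ.filter (fun w => A a w = true)).card : ℝ) = (outdeg A a : ℝ) := rfl
    have h1 : ∑ w ∈ univ.filter (fun w => A a w = true), (x v₀ - x w) = 0 := by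
      rw [Finset.sum_sub_distrib, Finset.sum_const, nsmul_eq_mul, hcard]
      rw [ha] at hsum
      linarith
    have h2 := (Finset.sum_eq_zero_iff_of_nonneg
      (fun w _ => sub_nonneg.2 (hmax w (Finset.mem_univ w)))).1 h1
    have h3 := h2 b (by simp [hab])
    linarith [h3]
  have reach : ∀ u, Relation.ReflTransGen (fun a b => A a b = true) v₀ u → x u = x v₀ := by
    intro u h
    induction h with
    | refl => rfl
    | tail _ hbc ih => exact step _ _ ih hbc
  rw [reach v (hsc v₀ v), reach w (hsc v₀ w)]

lemma rev_sc (A : Fin n → Fin n → Bool)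
    (hsc : ∀ i j, Relation.ReflTransGen (fun a b => A a b = true) i j) :
    ∀ i j, Relation.ReflTransGen (fun a b => A b a = true) i j := by
  intro a b
  have h := hsc b a
  induction h with
  | refl => exact Relation.ReflTransGen.refl
  | tail _ hyz ih => exact Relation.ReflTransGen.head hyz ih

lemma lap_rev (A : Fin n → Fin n → Bool) (hbal : ∀ i, indeg A i = outdeg A i) (v w : Fin n) :
    lap (fun a b => A b a) v w = lap A w v := by
  unfold lap
  by_cases h : v = w
  · subst h
    have : outdeg (fun a b => A b a) v = indeg A v := rfl
    simp [this, hbal v]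
  · simp [h, Ne.symm h]

lemma const_eval (x : Fin n → ℝ) (hc : ∀ a b, x a = x b) (hs : ∑ v, x v = -1)
    (hn : 0 < n) (v : Fin n) : x v = -1/(n:ℝ) := by
  have : ∑ u, x u = (n : ℝ) * x v := by
    rw [Finset.sum_congr rfl (fun u _ => hc u v)]
    simp [Finset.sum_const, nsmul_eq_mul]
  have hn' : (n:ℝ) ≠ 0 := by positivity
  field_simp
  linarith [this, hs]

lemma proj_P (A : Fin n → Fin n → Bool) (hA : ∀ i, A i i = false)
    (hsc : ∀ i j, Relation.ReflTransGen (fun a b => A a b = true) i j)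
    (M : Matrix (Fin n) (Fin n) ℝ) (hM : IsMoorePenrose (lap A) M)
    (i v : Fin n) :
    (M * lap A) v i = (if v = i then 1 else 0) - 1/(n:ℝ) := by
  set L := lap A with hL
  set x : Fin n → ℝ := fun v => (M * L) v i - (if v = i then 1 else 0) with hxdef
  have hx : ∀ v, ∑ w, L v w * x w = 0 := by
    intro v
    have e1 : ∑ w, L v w * (M * L) w i = (L * (M * L)) v i := by
      rw [Matrix.mul_apply]
    have e2 : ∑ w, L v w * (if w = i then (1:ℝ) else 0) = L v i := by
      simp [mul_ite]
    have e3 : (L * (M * L)) v i = L v i := by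
      rw [← Matrix.mul_assoc, hM.1]
    simp only [hxdef, mul_sub, Finset.sum_sub_distrib, e1, e2, e3, sub_self]
  have hconst := ker_const A hA hsc x hx
  have hsymm : ∀ a b, (M * L) a b = (M * L) b a := by
    intro a b
    conv_lhs => rw [← hM.2.2.2]
    rfl
  have hcolsum : ∑ v, (M * L) v i = 0 := by
    calc ∑ v, (M * L) v i = ∑ v, (M * L) i v := by
          exact Finset.sum_congr rfl (fun v _ => hsymm v i)
      _ = ∑ v, ∑ w, M i w * L w v := by
          exact Finset.sum_congr rfl (fun v _ => Matrix.mul_apply)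
      _ = ∑ w, M i w * ∑ v, L w v := by
          rw [Finset.sum_comm]
          exact Finset.sum_congr rfl (fun w _ => (Finset.mul_sum _ _ _).symm)
      _ = 0 := by
          exact Finset.sum_eq_zero (fun w _ => by rw [show ∑ v, L w v = 0 from lap_row_sum A hA w, mul_zero])
  have hsum : ∑ v, x v = -1 := by
    simp only [hxdef, Finset.sum_sub_distrib, hcolsum]
    simp
  have := const_eval x hconst hsum i.pos v
  simp only [hxdef] at this
  rw [neg_div] at this
  linarith [this]

lemma proj_Q (A : Fin n → Fin n → Bool) (hA : ∀ i, A i i = false)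
    (hsc : ∀ i j, Relation.ReflTransGen (fun a b => A a b = true) i j)
    (hbal : ∀ i, indeg A i = outdeg A i)
    (M : Matrix (Fin n) (Fin n) ℝ) (hM : IsMoorePenrose (lap A) M)
    (i v : Fin n) :
    (lap A * M) v i = (if v = i then 1 else 0) - 1/(n:ℝ) := by
  set L := lap A with hL
  set y : Fin n → ℝ := fun v => (L * M) v i - (if v = i then 1 else 0) with hydef
  have hsymm : ∀ a b, (L * M) a b = (L * M) b a := by
    intro a b
    conv_lhs => rw [← hM.2.2.1]
    rfl
  have hy : ∀ v, ∑ w, lap (fun a b => A b a) v w * y w = 0 := by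
    intro v
    have e0 : ∀ w, lap (fun a b => A b a) v w = L w v := fun w => lap_rev A hbal v w
    have e1 : ∑ w, L w v * (L * M) w i = L i v := by
      calc ∑ w, L w v * (L * M) w i = ∑ w, (L * M) i w * L w v := by
            exact Finset.sum_congr rfl (fun w _ => by rw [hsymm w i]; ring)
        _ = ((L * M) * L) i v := (Matrix.mul_apply).symm
        _ = L i v := by rw [hM.1]
    have e2 : ∑ w, L w v * (if w = i then (1:ℝ) else 0) = L i v := by
      simp [mul_ite]
    simp only [hydef, e0, mul_sub, Finset.sum_sub_distrib, e1, e2, sub_self]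
  have hconst := ker_const (fun a b => A b a) (fun v => hA v) (rev_sc A hsc) y hy
  have hcolsum : ∑ v, (L * M) v i = 0 := by
    calc ∑ v, (L * M) v i = ∑ v, ∑ w, L v w * M w i := by
          exact Finset.sum_congr rfl (fun v _ => Matrix.mul_apply)
      _ = ∑ w, (∑ v, L v w) * M w i := by
          rw [Finset.sum_comm]
          exact Finset.sum_congr rfl (fun w _ => by rw [← Finset.sum_mul])
      _ = 0 := by
          exact Finset.sum_eq_zero (fun w _ => by rw [show ∑ v, L v w = 0 from lap_col_sum A hA hbal w, zero_mul])
  have hsum : ∑ v, y v = -1 := by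
    simp only [hydef, Finset.sum_sub_distrib, hcolsum]
    simp
  have := const_eval y hconst hsum i.pos v
  simp only [hydef] at this
  rw [neg_div] at this
  linarith [this]

lemma filter_card_one {p : Fin n → Bool} (h : (univ.filter (fun v => p v = true)).card = 1) :
    ∃ k, ∀ v, p v = true ↔ v = k := by
  obtain ⟨a, ha⟩ := Finset.card_eq_one.1 h
  refine ⟨a, fun v => ?_⟩
  have := Finset.ext_iff.1 ha v
  simpa using this

lemma filter_card_one' {p : Fin n → Bool} (h : (univ.filter (fun v => p v = true)).card = 1)
    {i : Fin n} (hi : p i = true) : ∀ v, p v = true ↔ v = i := by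
  obtain ⟨k, hk⟩ := filter_card_one h
  have : i = k := (hk i).1 hi
  subst this
  exact hk

lemma lap_col_struct (A : Fin n → Fin n → Bool) {i j : Fin n} (hij : i ≠ j)
    (hdeg : outdeg A j = 1) (huniq : ∀ v, A v j = true ↔ v = i) (w : Fin n) :
    lap A w j = (if w = j then 1 else 0) - (if w = i then 1 else 0) := by
  by_cases h : w = j
  · subst h
    simp [lap, hdeg, Ne.symm hij]
  · by_cases h2 : w = i
    · subst h2
      simp [lap, h, (huniq w).2 rfl]
    · have : A w j = false := by
        cases hwj : A w j
        · rfl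
        · exact absurd ((huniq w).1 hwj) h2
      simp [lap, h, h2, this]

lemma lap_row_struct (A : Fin n → Fin n → Bool) (hA : ∀ i, A i i = false) {j k : Fin n}
    (hdeg : outdeg A j = 1) (huniq : ∀ v, A j v = true ↔ v = k) (w : Fin n) :
    lap A j w = (if w = j then 1 else 0) - (if w = k then 1 else 0) := by
  have hkj : k ≠ j := by
    intro h; subst h
    exact absurd ((huniq k).2 rfl) (by simp [hA k])
  by_cases h : w = j
  · subst h
    simp [lap, hdeg, Ne.symm hkj]
  · by_cases h2 : w = k
    · subst h2
      simp [lap, Ne.symm h, h, (huniq w).2 rfl]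
    · have : A j w = false := by
        cases hwj : A j w
        · rfl
        · exact absurd ((huniq w).1 hwj) h2
      simp [lap, Ne.symm h, h, h2, this]

theorem stmt_14' {n : ℕ} (A : Fin n → Fin n → Bool) (hA : ∀ i, A i i = false)
    (hsc : ∀ i j, Relation.ReflTransGen (fun a b => A a b = true) i j)
    (hbal : ∀ i, indeg A i = outdeg A i)
    (i j : Fin n) (hedge : A i j = true)
    (hdeg : (indeg A i = 1 ∧ outdeg A i = 1) ∨ (indeg A j = 1 ∧ outdeg A j = 1))
    (M : Matrix (Fin n) (Fin n) ℝ) (hM : IsMoorePenrose (lap A) M) :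
    M i i + M j j - 2 * M i j ≤ 1 := by
  have hij : i ≠ j := by
    intro h; subst h; rw [hA i] at hedge; exact absurd hedge (by simp)
  have hnpos : (0:ℝ) < 1/(n:ℝ) := by
    have : 0 < n := i.pos
    positivity
  have hP := proj_P A hA hsc M hM
  have hQ := proj_Q A hA hsc hbal M hM
  -- max principles
  have colmax : ∀ a v, M v a ≤ M a a := by
    intro a
    refine max_principle A hA a (fun v => M v a) ?_
    intro v hv
    have : ∑ w, lap A v w * M w a = (lap A * M) v a := (Matrix.mul_apply).symm
    rw [this, hQ a v, if_neg hv]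
    linarith
  have rowmax : ∀ a v, M a v ≤ M a a := by
    intro a
    refine max_principle (fun x y => A y x) (fun v => hA v) a (fun v => M a v) ?_
    intro v hv
    have e : ∑ w, lap (fun x y => A y x) v w * M a w = (M * lap A) a v := by
      rw [Matrix.mul_apply]
      exact Finset.sum_congr rfl (fun w _ => by rw [lap_rev A hbal]; ring)
    rw [e, hP v a, if_neg (Ne.symm hv)]
    linarith
  rcases hdeg with ⟨hin, hout⟩ | ⟨hin, hout⟩
  · -- i has degree one: unique out-neighbor is j, unique in-neighbor k
    have huout : ∀ v, A i v = true ↔ v = j := filter_card_one' hout hedge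
    obtain ⟨k, huin⟩ := filter_card_one (p := fun v => A v i) hin
    have hodi : outdeg A i = 1 := hout
    -- row i of lap A
    have hrow := lap_row_struct A hA hodi huout
    -- column i of lap A
    have hcol := lap_col_struct A (fun h => by
      subst h
      exact absurd ((huin k).2 rfl) (by simp [hA k])) (hbal i ▸ hin) huin
    -- (c): M i v - M j v = δ_iv - 1/n
    have hc : ∀ v, M i v - M j v = (if i = v then 1 else 0) - 1/(n:ℝ) := by
      intro v
      have e : (lap A * M) i v = M i v - M j v := by
        rw [Matrix.mul_apply]
        have : ∀ w, lap A i w * M w v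
            = ((if w = i then (1:ℝ) else 0) - (if w = j then 1 else 0)) * M w v := by
          intro w
          rw [hrow w]
        rw [Finset.sum_congr rfl (fun w _ => this w)]
        simp [sub_mul, Finset.sum_sub_distrib, ite_mul]
      rw [← e, hQ v i]
    -- (d): M v i - M v k = δ_vi - 1/n
    have hd : ∀ v, M v i - M v k = (if v = i then 1 else 0) - 1/(n:ℝ) := by
      intro v
      have e : (M * lap A) v i = M v i - M v k := by
        rw [Matrix.mul_apply]
        have : ∀ w, M v w * lap A w i
            = M v w * ((if w = i then (1:ℝ) else 0) - (if w = k then 1 else 0)) := by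
          intro w
          rw [hcol w]
        rw [Finset.sum_congr rfl (fun w _ => this w)]
        simp [mul_sub, Finset.sum_sub_distrib, mul_ite]
      rw [← e, hP i v]
    have h1 := hc i
    have h2 := hc j
    have h3 := hd j
    have h4 := rowmax j k
    rw [if_pos rfl] at h1
    rw [if_neg hij] at h2
    rw [if_neg (Ne.symm hij)] at h3
    linarith
  · -- j has degree one: unique in-neighbor is i, unique out-neighbor k
    have huin : ∀ v, A v j = true ↔ v = i := filter_card_one' hin hedge
    obtain ⟨k, huout⟩ := filter_card_one (p := fun v => A j v) hout
    have hodj : outdeg A j = 1 := hout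
    have hcol := lap_col_struct A hij hodj huin
    have hrow := lap_row_struct A hA hodj huout
    -- (a): M v j - M v i = δ_vj - 1/n
    have ha : ∀ v, M v j - M v i = (if v = j then 1 else 0) - 1/(n:ℝ) := by
      intro v
      have e : (M * lap A) v j = M v j - M v i := by
        rw [Matrix.mul_apply]
        rw [Finset.sum_congr rfl (fun w _ => by rw [hcol w])]
        simp [mul_sub, Finset.sum_sub_distrib, mul_ite]
      rw [← e, hP j v]
    -- (b): M j v - M k v = δ_jv - 1/n
    have hb : ∀ v, M j v - M k v = (if j = v then 1 else 0) - 1/(n:ℝ) := by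
      intro v
      have e : (lap A * M) j v = M j v - M k v := by
        rw [Matrix.mul_apply]
        rw [Finset.sum_congr rfl (fun w _ => by rw [hrow w])]
        simp [sub_mul, Finset.sum_sub_distrib, ite_mul]
      rw [← e, hQ v j]
    have h1 := ha i
    have h2 := ha j
    have h3 := hb i
    have h4 := colmax i k
    rw [if_neg hij] at h1
    rw [if_pos rfl] at h2
    rw [if_neg (Ne.symm hij)] at h3
    linarith
end aux


/-- in a strongly connected balanced digraph, if `(i,j)` is an edge and
`i` or `j` has degree one, then `r_{ij} ≤ 1`. -/
theorem stmt_14 {n : ℕ} (A : Fin n → Fin n → Bool) (hA : ∀ i, A i i = false)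
    (hsc : StronglyConnected A) (hbal : IsBalanced A)
    (i j : Fin n) (hedge : A i j = true)
    (hdeg : (indeg A i = 1 ∧ outdeg A i = 1) ∨ (indeg A j = 1 ∧ outdeg A j = 1))
    (M : Matrix (Fin n) (Fin n) ℝ) (hM : IsMoorePenrose (lap A) M) :
    resist M i j ≤ 1 := by
  unfold resist
  exact stmt_14' A hA hsc hbal i j hedge hdeg M hM
end

section
/- Let G be a strongly connected balanced digraph with Laplacian L partitioned as L = [[B, −Be],[−eᵀB, eᵀBe]] with B of size (n−1)×(n−1), let C = B⁻¹, x = Ce, y = Cᵀe. Then the resistance between vertices 1 and n satisfies r_{1n} = c_{11} − (1/n)(y₁ − x₁), where c_{11} is the (1,1) entry of C and x₁, y₁ the first entries of x and y. -/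
open Matrix Finset

namespace ST17

lemma sum_neg_ind {m : ℕ} (g : Fin m → Bool) (s : Finset (Fin m)) :
    ∑ j ∈ s, (if g j then (-1:ℝ) else 0) = -((s.filter (fun j => g j = true)).card : ℝ) := by
  rw [Finset.sum_ite, Finset.sum_const, Finset.sum_const_zero, add_zero, nsmul_eq_mul,
    mul_neg_one]


lemma row_sum {m : ℕ} (A : Fin m → Fin m → Bool) (hA : ∀ i, A i i = false) (i : Fin m) :
    ∑ j, lap A i j = 0 := by
  rw [← Finset.add_sum_erase _ _ (Finset.mem_univ i)]
  have h1 : lap A i i = (outdeg A i : ℝ) := by simp [lap]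
  have h2 : ∀ j ∈ Finset.univ.erase i, lap A i j = (if A i j then (-1:ℝ) else 0) := by
    intro j hj
    have : i ≠ j := (Finset.ne_of_mem_erase hj).symm
    simp [lap, this]
  rw [h1, Finset.sum_congr rfl h2, sum_neg_ind]
  have h3 : (Finset.univ.erase i).filter (fun j => A i j = true)
      = Finset.univ.filter (fun j => A i j = true) := by
    rw [Finset.filter_erase, Finset.erase_eq_of_notMem]
    simp [hA i]
  rw [h3, outdeg]
  ring

lemma col_sum {m : ℕ} (A : Fin m → Fin m → Bool) (hA : ∀ i, A i i = false)
    (hbal : IsBalanced A) (j : Fin m) : ∑ i, lap A i j = 0 := by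
  rw [← Finset.add_sum_erase _ _ (Finset.mem_univ j)]
  have h1 : lap A j j = (outdeg A j : ℝ) := by simp [lap]
  have h2 : ∀ i ∈ Finset.univ.erase j, lap A i j = (if A i j then (-1:ℝ) else 0) := by
    intro i hi
    have : i ≠ j := Finset.ne_of_mem_erase hi
    simp [lap, this]
  rw [h1, Finset.sum_congr rfl h2, sum_neg_ind]
  have h3 : (Finset.univ.erase j).filter (fun i => A i j = true)
      = Finset.univ.filter (fun i => A i j = true) := by
    rw [Finset.filter_erase, Finset.erase_eq_of_notMem]
    simp [hA j]
  rw [h3]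
  have : (Finset.univ.filter (fun i => A i j = true)).card = indeg A j := rfl
  rw [this, hbal j]
  ring



lemma row_eq {m : ℕ} (A : Fin m → Fin m → Bool) (hA : ∀ i, A i i = false)
    (w : Fin m → ℝ) (hw : (lap A).mulVec w = 0) (a : Fin m) :
    ∑ j ∈ Finset.univ.filter (fun j => A a j = true), w j = (outdeg A a : ℝ) * w a := by
  have h0 : ∑ j, lap A a j * w j = 0 := by
    have := congrFun hw a
    rwa [Matrix.mulVec, dotProduct, Pi.zero_apply] at this
  rw [← Finset.add_sum_erase _ _ (Finset.mem_univ a)] at h0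
  have h1 : lap A a a * w a = (outdeg A a : ℝ) * w a := by simp [lap]
  have h2 : ∀ j ∈ Finset.univ.erase a, lap A a j * w j
      = (if A a j then -w j else 0) := by
    intro j hj
    have : a ≠ j := (Finset.ne_of_mem_erase hj).symm
    by_cases h : A a j <;> simp [lap, this, h]
  rw [h1, Finset.sum_congr rfl h2, Finset.sum_ite, Finset.sum_const_zero, add_zero,
    Finset.sum_neg_distrib] at h0
  have h3 : (Finset.univ.erase a).filter (fun j => A a j = true)
      = Finset.univ.filter (fun j => A a j = true) := by
    rw [Finset.filter_erase, Finset.erase_eq_of_notMem]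
    simp [hA a]
  rw [h3] at h0
  linarith [h0]

lemma kernel_const {n : ℕ} (A : Fin (n+2) → Fin (n+2) → Bool) (hA : ∀ i, A i i = false)
    (hsc : StronglyConnected A) (w : Fin (n+2) → ℝ) (hw : (lap A).mulVec w = 0) :
    ∀ i j, w i = w j := by
  obtain ⟨i₀, -, hmax⟩ := Finset.exists_max_image (Finset.univ : Finset (Fin (n+2))) w
    ⟨0, Finset.mem_univ 0⟩
  have step : ∀ a b, w a = w i₀ → A a b = true → w b = w i₀ := by
    intro a b ha hab
    by_contra hne
    have hlt : w b < w i₀ := lt_of_le_of_ne (hmax b (Finset.mem_univ b)) hne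
    have h0 := row_eq A hA w hw a
    have hb : b ∈ Finset.univ.filter (fun j => A a j = true) := by simp [hab]
    have hstrict : ∑ j ∈ Finset.univ.filter (fun j => A a j = true), w j
        < ∑ j ∈ Finset.univ.filter (fun j => A a j = true), w i₀ := by
      refine Finset.sum_lt_sum (fun j _ => hmax j (Finset.mem_univ j)) ⟨b, hb, hlt⟩
    rw [Finset.sum_const, nsmul_eq_mul, ← outdeg, h0, ha] at hstrict
    exact lt_irrefl _ hstrict
  have reach : ∀ j, Reach A i₀ j → w j = w i₀ := by
    intro j hj
    induction hj with
    | refl => rfl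
    | tail hab hedge ih => exact step _ _ ih hedge
  intro i j
  rw [reach i (hsc i₀ i), reach j (hsc i₀ j)]



lemma lap_last_col {n : ℕ} (A : Fin (n+2) → Fin (n+2) → Bool) (hA : ∀ i, A i i = false)
    (hbal : IsBalanced A) (c : Fin (n+2)) :
    lap A (Fin.last (n+1)) c = -∑ i' : Fin (n+1), lap A (Fin.castSucc i') c := by
  have := col_sum A hA hbal c
  rw [Fin.sum_univ_castSucc] at this
  linarith

lemma B_unit {n : ℕ} (A : Fin (n+2) → Fin (n+2) → Bool) (hA : ∀ i, A i i = false)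
    (hsc : StronglyConnected A) (hbal : IsBalanced A) :
    IsUnit ((lap A).submatrix Fin.castSucc Fin.castSucc).det := by
  rw [isUnit_iff_ne_zero]
  intro hdet
  obtain ⟨v, hv, hBv⟩ := (Matrix.exists_mulVec_eq_zero_iff).2 hdet
  set w : Fin (n+2) → ℝ := fun i => Fin.lastCases 0 v i with hwdef
  have hwlast : w (Fin.last (n+1)) = 0 := by simp [hwdef]
  have hwcs : ∀ i : Fin (n+1), w (Fin.castSucc i) = v i := by simp [hwdef]
  have hrow : ∀ i : Fin (n+2),
      ∑ j' : Fin (n+1), lap A i (Fin.castSucc j') * v j' = 0 → ((lap A).mulVec w) i = 0 := by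
    intro i h
    rw [Matrix.mulVec, dotProduct, Fin.sum_univ_castSucc, hwlast, mul_zero, add_zero]
    simpa only [hwcs] using h
  have hw : (lap A).mulVec w = 0 := by
    funext i
    rw [Pi.zero_apply]
    refine hrow i ?_
    induction i using Fin.lastCases with
    | last =>
      have : ∀ j' : Fin (n+1), lap A (Fin.last (n+1)) (Fin.castSucc j') * v j'
          = -∑ i' : Fin (n+1), lap A (Fin.castSucc i') (Fin.castSucc j') * v j' := by
        intro j'
        rw [lap_last_col A hA hbal, neg_mul, Finset.sum_mul]
      rw [Finset.sum_congr rfl (fun j' _ => this j')]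
      rw [Finset.sum_neg_distrib, Finset.sum_comm]
      have hz : ∀ y : Fin (n+1), ∑ x : Fin (n+1), lap A (Fin.castSucc y) (Fin.castSucc x) * v x = 0 := by
        intro y
        have := congrFun hBv y
        simpa [Matrix.mulVec, dotProduct, Matrix.submatrix] using this
      rw [Finset.sum_congr rfl (fun y _ => hz y)]
      simp
    | cast i' =>
      have : (((lap A).submatrix Fin.castSucc Fin.castSucc).mulVec v) i' = 0 := by
        rw [hBv]; rfl
      rw [Matrix.mulVec, dotProduct] at this
      simpa using this
  have hconst := kernel_const A hA hsc w hw
  apply hv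
  funext i
  have := hconst (Fin.castSucc i) (Fin.last (n+1))
  rw [hwcs, hwlast] at this
  simpa using this



noncomputable def QQ {n : ℕ} (C : Matrix (Fin (n+1)) (Fin (n+1)) ℝ) :
    Matrix (Fin (n+2)) (Fin (n+2)) ℝ :=
  Matrix.of fun i j =>
    if hi : i = Fin.last (n+1) then 0
    else (if hj : j = Fin.last (n+1) then 0 else C (i.castPred hi) (j.castPred hj))
      - (∑ k, C (i.castPred hi) k) / ((n : ℝ) + 2)

def JJ (m : ℕ) : Matrix (Fin m) (Fin m) ℝ := Matrix.of fun _ _ => 1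

noncomputable def PP (n : ℕ) : Matrix (Fin (n+2)) (Fin (n+2)) ℝ :=
  1 - ((n : ℝ) + 2)⁻¹ • JJ (n+2)

lemma QQ_cs_cs {n : ℕ} (C : Matrix (Fin (n+1)) (Fin (n+1)) ℝ) (i j : Fin (n+1)) :
    QQ C (Fin.castSucc i) (Fin.castSucc j) = C i j - (∑ k, C i k) / ((n : ℝ) + 2) := by
  have hi : Fin.castSucc i ≠ Fin.last (n+1) := (Fin.castSucc_lt_last i).ne
  have hj : Fin.castSucc j ≠ Fin.last (n+1) := (Fin.castSucc_lt_last j).ne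
  simp [QQ, hi, hj]

lemma QQ_cs_last {n : ℕ} (C : Matrix (Fin (n+1)) (Fin (n+1)) ℝ) (i : Fin (n+1)) :
    QQ C (Fin.castSucc i) (Fin.last (n+1)) = - (∑ k, C i k) / ((n : ℝ) + 2) := by
  have hi : Fin.castSucc i ≠ Fin.last (n+1) := (Fin.castSucc_lt_last i).ne
  simp [QQ, hi]
  ring

lemma QQ_last {n : ℕ} (C : Matrix (Fin (n+1)) (Fin (n+1)) ℝ) (j : Fin (n+2)) :
    QQ C (Fin.last (n+1)) j = 0 := by
  simp [QQ]

lemma PP_apply {n : ℕ} (i j : Fin (n+2)) :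
    PP n i j = (if i = j then 1 else 0) - ((n : ℝ) + 2)⁻¹ := by
  simp [PP, JJ, Matrix.one_apply, Matrix.sub_apply]

lemma Npos {n : ℕ} : ((n : ℝ) + 2) ≠ 0 := by positivity

lemma lap_mul_QQ {n : ℕ} (A : Fin (n+2) → Fin (n+2) → Bool) (hA : ∀ i, A i i = false)
    (hbal : IsBalanced A) (C : Matrix (Fin (n+1)) (Fin (n+1)) ℝ)
    (hBC : (lap A).submatrix Fin.castSucc Fin.castSucc * C = 1) :
    lap A * QQ C = PP n := by
  have hBx : ∀ i' : Fin (n+1),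
      ∑ k' : Fin (n+1), lap A (Fin.castSucc i') (Fin.castSucc k') * (∑ k, C k' k) = 1 := by
    intro i'
    simp_rw [Finset.mul_sum]
    rw [Finset.sum_comm]
    have : ∀ j : Fin (n+1),
        ∑ k' : Fin (n+1), lap A (Fin.castSucc i') (Fin.castSucc k') * C k' j
        = (1 : Matrix (Fin (n+1)) (Fin (n+1)) ℝ) i' j := by
      intro j
      rw [← hBC, Matrix.mul_apply]
      rfl
    rw [Finset.sum_congr rfl (fun j _ => this j)]
    exact (Finset.sum_congr rfl fun j _ => Matrix.one_apply).trans (by simp)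
  have hBCe : ∀ i' j' : Fin (n+1),
      ∑ k' : Fin (n+1), lap A (Fin.castSucc i') (Fin.castSucc k') * C k' j'
      = (1 : Matrix (Fin (n+1)) (Fin (n+1)) ℝ) i' j' := by
    intro i' j'
    rw [← hBC, Matrix.mul_apply]
    rfl
  ext i j
  rw [Matrix.mul_apply, Fin.sum_univ_castSucc, QQ_last, mul_zero, add_zero, PP_apply]
  induction j using Fin.lastCases with
  | last =>
    have he : ∀ k' : Fin (n+1), lap A i (Fin.castSucc k') * QQ C (Fin.castSucc k') (Fin.last (n+1))
        = -(lap A i (Fin.castSucc k') * (∑ k, C k' k)) / ((n:ℝ)+2) := by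
      intro k'
      rw [QQ_cs_last]
      ring
    rw [Finset.sum_congr rfl (fun k' _ => he k')]
    induction i using Fin.lastCases with
    | last =>
      have : ∀ k' : Fin (n+1),
          -(lap A (Fin.last (n+1)) (Fin.castSucc k') * (∑ k, C k' k)) / ((n:ℝ)+2)
          = (∑ i' : Fin (n+1), lap A (Fin.castSucc i') (Fin.castSucc k') * (∑ k, C k' k)) / ((n:ℝ)+2) := by
        intro k'
        rw [lap_last_col A hA hbal, neg_mul, neg_neg, Finset.sum_mul]
      rw [Finset.sum_congr rfl (fun k' _ => this k'), ← Finset.sum_div, Finset.sum_comm]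
      rw [Finset.sum_congr rfl (fun i' _ => hBx i')]
      rw [if_pos rfl]
      push_cast
      field_simp
      simp only [Finset.sum_const, Finset.card_univ, Fintype.card_fin, nsmul_eq_mul, mul_one]
      push_cast
      ring
    | cast i' =>
      have : ∀ k' : Fin (n+1),
          -(lap A (Fin.castSucc i') (Fin.castSucc k') * (∑ k, C k' k)) / ((n:ℝ)+2)
          = -((lap A (Fin.castSucc i') (Fin.castSucc k') * (∑ k, C k' k)) / ((n:ℝ)+2)) := by
        intro k'; ring
      rw [Finset.sum_congr rfl (fun k' _ => this k'), Finset.sum_neg_distrib, ← Finset.sum_div,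
        hBx i']
      rw [if_neg (Fin.castSucc_lt_last i').ne]
      ring
  | cast j' =>
    have he : ∀ k' : Fin (n+1), lap A i (Fin.castSucc k') * QQ C (Fin.castSucc k') (Fin.castSucc j')
        = lap A i (Fin.castSucc k') * C k' j'
          - (lap A i (Fin.castSucc k') * (∑ k, C k' k)) / ((n:ℝ)+2) := by
      intro k'
      rw [QQ_cs_cs]
      ring
    rw [Finset.sum_congr rfl (fun k' _ => he k'), Finset.sum_sub_distrib, ← Finset.sum_div]
    induction i using Fin.lastCases with
    | last =>
      have h1 : ∀ k' : Fin (n+1), lap A (Fin.last (n+1)) (Fin.castSucc k') * C k' j'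
          = -∑ i' : Fin (n+1), lap A (Fin.castSucc i') (Fin.castSucc k') * C k' j' := by
        intro k'
        rw [lap_last_col A hA hbal, neg_mul, Finset.sum_mul]
      have h2 : ∀ k' : Fin (n+1), lap A (Fin.last (n+1)) (Fin.castSucc k') * (∑ k, C k' k)
          = -∑ i' : Fin (n+1), lap A (Fin.castSucc i') (Fin.castSucc k') * (∑ k, C k' k) := by
        intro k'
        rw [lap_last_col A hA hbal, neg_mul, Finset.sum_mul]
      rw [Finset.sum_congr rfl (fun k' _ => h1 k'), Finset.sum_congr rfl (fun k' _ => h2 k'),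
        Finset.sum_neg_distrib, Finset.sum_neg_distrib, Finset.sum_comm]
      rw [Finset.sum_congr rfl (fun i' _ => hBCe i' j')]
      conv_lhs => rw [Finset.sum_comm]
      rw [Finset.sum_congr rfl (fun i' _ => hBx i')]
      have hne : Fin.last (n+1) ≠ Fin.castSucc j' := ((Fin.castSucc_lt_last j').ne).symm
      rw [if_neg hne]
      simp only [Matrix.one_apply]
      field_simp
      simp only [Finset.sum_ite_eq, Finset.sum_ite_eq', Finset.mem_univ, if_true, ite_true,
        Finset.sum_const, Finset.card_univ, Fintype.card_fin, nsmul_eq_mul, mul_one]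
      push_cast
      ring
    | cast i' =>
      rw [hBCe i' j', hBx i']
      simp [Matrix.one_apply, Fin.castSucc_inj, one_div]

lemma QQ_mul_JJ {n : ℕ} (C : Matrix (Fin (n+1)) (Fin (n+1)) ℝ) :
    QQ C * JJ (n+2) = 0 := by
  ext i j
  rw [Matrix.mul_apply]
  have : ∀ k, QQ C i k * JJ (n+2) k j = QQ C i k := by intro k; simp [JJ]
  rw [Finset.sum_congr rfl (fun k _ => this k), Matrix.zero_apply]
  induction i using Fin.lastCases with
  | last => simp [QQ_last]
  | cast i' =>
    rw [Fin.sum_univ_castSucc, QQ_cs_last]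
    have : ∀ j' : Fin (n+1), QQ C (Fin.castSucc i') (Fin.castSucc j')
        = C i' j' - (∑ k, C i' k) / ((n:ℝ)+2) := fun j' => QQ_cs_cs C i' j'
    rw [Finset.sum_congr rfl (fun j' _ => this j'), Finset.sum_sub_distrib, Finset.sum_const]
    have hcard : (Finset.univ : Finset (Fin (n+1))).card = n + 1 := by simp
    rw [hcard, nsmul_eq_mul]
    push_cast
    field_simp
    ring

lemma JJ_mul_JJ {n : ℕ} : JJ (n+2) * JJ (n+2) = ((n:ℝ)+2) • JJ (n+2) := by
  ext i j
  rw [Matrix.mul_apply]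
  simp [JJ, Finset.sum_const, Finset.card_univ]

lemma lap_mul_JJ {n : ℕ} (A : Fin (n+2) → Fin (n+2) → Bool) (hA : ∀ i, A i i = false) :
    lap A * JJ (n+2) = 0 := by
  ext i j
  rw [Matrix.mul_apply, Matrix.zero_apply]
  have : ∀ k, lap A i k * JJ (n+2) k j = lap A i k := by intro k; simp [JJ]
  rw [Finset.sum_congr rfl (fun k _ => this k)]
  exact row_sum A hA i

lemma JJ_mul_lap {n : ℕ} (A : Fin (n+2) → Fin (n+2) → Bool) (hA : ∀ i, A i i = false)
    (hbal : IsBalanced A) : JJ (n+2) * lap A = 0 := by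
  ext i j
  rw [Matrix.mul_apply, Matrix.zero_apply]
  have : ∀ k, JJ (n+2) i k * lap A k j = lap A k j := by intro k; simp [JJ]
  rw [Finset.sum_congr rfl (fun k _ => this k)]
  exact col_sum A hA hbal j

lemma PP_mul_PP {n : ℕ} : PP n * PP n = PP n := by
  have hc : ((n:ℝ)+2)⁻¹ * ((n:ℝ)+2) = 1 := inv_mul_cancel₀ Npos
  unfold PP
  have hJ : (((n:ℝ)+2)⁻¹ • JJ (n+2)) * (((n:ℝ)+2)⁻¹ • JJ (n+2)) = ((n:ℝ)+2)⁻¹ • JJ (n+2) := by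
    rw [Matrix.smul_mul, Matrix.mul_smul, JJ_mul_JJ, smul_smul, smul_smul]
    congr 1
    field_simp
  rw [mul_sub, sub_mul, sub_mul, one_mul, mul_one, hJ, one_mul]
  abel

lemma PP_transpose {n : ℕ} : (PP n)ᵀ = PP n := by
  unfold PP
  rw [Matrix.transpose_sub, Matrix.transpose_one, Matrix.transpose_smul]
  congr 1

lemma lap_mul_PP {n : ℕ} (A : Fin (n+2) → Fin (n+2) → Bool) (hA : ∀ i, A i i = false) :
    lap A * PP n = lap A := by
  unfold PP
  rw [mul_sub, mul_one, Matrix.mul_smul, lap_mul_JJ A hA, smul_zero, sub_zero]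

lemma PP_mul_lap {n : ℕ} (A : Fin (n+2) → Fin (n+2) → Bool) (hA : ∀ i, A i i = false)
    (hbal : IsBalanced A) : PP n * lap A = lap A := by
  unfold PP
  rw [sub_mul, one_mul, Matrix.smul_mul, JJ_mul_lap A hA hbal, smul_zero, sub_zero]

lemma QQ_mul_PP {n : ℕ} (C : Matrix (Fin (n+1)) (Fin (n+1)) ℝ) :
    QQ C * PP n = QQ C := by
  unfold PP
  rw [mul_sub, mul_one, Matrix.mul_smul, QQ_mul_JJ, smul_zero, sub_zero]

lemma penrose_M0 {n : ℕ} (A : Fin (n+2) → Fin (n+2) → Bool) (hA : ∀ i, A i i = false)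
    (hsc : StronglyConnected A) (hbal : IsBalanced A)
    (C : Matrix (Fin (n+1)) (Fin (n+1)) ℝ)
    (hBC : (lap A).submatrix Fin.castSucc Fin.castSucc * C = 1) :
    IsMoorePenrose (lap A) (PP n * QQ C) := by
  have hLM : lap A * (PP n * QQ C) = PP n := by
    rw [← mul_assoc, lap_mul_PP A hA, lap_mul_QQ A hA hbal C hBC]
  have hML : (PP n * QQ C) * lap A = PP n := by
    have hLX : lap A * (QQ C * lap A - 1) = 0 := by
      rw [mul_sub, mul_one, ← mul_assoc, lap_mul_QQ A hA hbal C hBC,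
        PP_mul_lap A hA hbal, sub_self]
    set X := QQ C * lap A - 1 with hX
    have hcols : ∀ i j k, X i j = X k j := by
      intro i j k
      have : (lap A).mulVec (fun a => X a j) = 0 := by
        funext b
        have := congrFun (congrFun hLX b) j
        rw [Matrix.mul_apply] at this
        rw [Matrix.mulVec, dotProduct]
        exact this
      exact kernel_const A hA hsc _ this i k
    have hJX : JJ (n+2) * X = ((n:ℝ)+2) • X := by
      ext i j
      rw [Matrix.mul_apply]
      have : ∀ k, JJ (n+2) i k * X k j = X i j := by
        intro k
        rw [hcols k j i]
        simp [JJ]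
      rw [Finset.sum_congr rfl (fun k _ => this k), Finset.sum_const, Finset.card_univ,
        Matrix.smul_apply, nsmul_eq_mul, smul_eq_mul, Fintype.card_fin]
      push_cast
      ring
    have hPX : PP n * X = 0 := by
      unfold PP
      rw [sub_mul, one_mul, Matrix.smul_mul, hJX, smul_smul, inv_mul_cancel₀ Npos, one_smul,
        sub_self]
    have h5 : (PP n * QQ C) * lap A = PP n * (1 + X) := by
      rw [mul_assoc]
      congr 1
      rw [hX]
      abel
    rw [h5, mul_add, mul_one, hPX, add_zero]
  refine ⟨?_, ?_, ?_, ?_⟩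
  · rw [hLM, PP_mul_lap A hA hbal]
  · rw [hML, ← mul_assoc, PP_mul_PP]
  · rw [hLM, PP_transpose]
  · rw [hML, PP_transpose]

lemma mp_unique {N : ℕ} (L M M' : Matrix (Fin N) (Fin N) ℝ)
    (h : IsMoorePenrose L M) (h' : IsMoorePenrose L M') : M = M' := by
  obtain ⟨h1, h2, h3, h4⟩ := h
  obtain ⟨h1', h2', h3', h4'⟩ := h'
  have hLt : Lᵀ = Lᵀ * (L * M') := by
    conv_lhs => rw [← h1']
    rw [Matrix.transpose_mul, h3']
  have hLt2 : Lᵀ = (M' * L) * Lᵀ := by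
    conv_lhs => rw [← h1', mul_assoc]
    rw [Matrix.transpose_mul, h4']
  have e1 : L * M = L * M' := by
    calc L * M = (L * M)ᵀ := h3.symm
    _ = Mᵀ * Lᵀ := by rw [Matrix.transpose_mul]
    _ = Mᵀ * (Lᵀ * (L * M')) := by rw [← hLt]
    _ = (Mᵀ * Lᵀ) * (L * M') := by rw [mul_assoc]
    _ = (L * M)ᵀ * (L * M') := by rw [Matrix.transpose_mul]
    _ = (L * M) * (L * M') := by rw [h3]
    _ = ((L * M) * L) * M' := by rw [← mul_assoc]
    _ = L * M' := by rw [h1]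
  have e2 : M * L = M' * L := by
    calc M * L = (M * L)ᵀ := h4.symm
    _ = Lᵀ * Mᵀ := by rw [Matrix.transpose_mul]
    _ = ((M' * L) * Lᵀ) * Mᵀ := by rw [← hLt2]
    _ = (M' * L) * (Lᵀ * Mᵀ) := by rw [mul_assoc]
    _ = (M' * L) * (M * L)ᵀ := by rw [Matrix.transpose_mul]
    _ = (M' * L) * (M * L) := by rw [h4]
    _ = M' * ((L * M) * L) := by rw [mul_assoc, ← mul_assoc L M L]
    _ = M' * L := by rw [h1]
  calc M = M * L * M := h2.symm
  _ = (M' * L) * M := by rw [e2]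
  _ = M' * (L * M) := by rw [mul_assoc]
  _ = M' * (L * M') := by rw [e1]
  _ = M' * L * M' := by rw [mul_assoc]
  _ = M' := h2'


lemma PQ_entry {n : ℕ} (C : Matrix (Fin (n+1)) (Fin (n+1)) ℝ) (i j : Fin (n+2)) :
    (PP n * QQ C) i j = QQ C i j - ((n:ℝ)+2)⁻¹ * ∑ k, QQ C k j := by
  rw [Matrix.mul_apply]
  have : ∀ k, PP n i k * QQ C k j
      = (if i = k then QQ C k j else 0) - ((n:ℝ)+2)⁻¹ * QQ C k j := by
    intro k
    rw [PP_apply]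
    by_cases h : i = k <;> simp [h] <;> ring
  rw [Finset.sum_congr rfl (fun k _ => this k), Finset.sum_sub_distrib,
    Finset.sum_ite_eq, if_pos (Finset.mem_univ i), ← Finset.mul_sum]

end ST17

open ST17 in
/-- with `B` the principal submatrix of the Laplacian deleting the last
vertex, `C = B⁻¹`, `x = Ce`, `y = Cᵀe`, the resistance between the first and last
vertices is `r_{1n} = c₁₁ - (1/n)(y₁ - x₁)`. -/
theorem stmt_17 {n : ℕ} (A : Fin (n+2) → Fin (n+2) → Bool) (hA : ∀ i, A i i = false)
    (hsc : StronglyConnected A) (hbal : IsBalanced A)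
    (M : Matrix (Fin (n+2)) (Fin (n+2)) ℝ) (hM : IsMoorePenrose (lap A) M)
    (C : Matrix (Fin (n+1)) (Fin (n+1)) ℝ)
    (hC : C = ((lap A).submatrix Fin.castSucc Fin.castSucc)⁻¹) :
    resist M 0 (Fin.last (n+1)) =
      C 0 0 - (1 / ((n : ℝ) + 2)) * ((∑ k, C k 0) - (∑ k, C 0 k)) := by
  have hBC : (lap A).submatrix Fin.castSucc Fin.castSucc * C = 1 := by
    rw [hC]
    exact Matrix.mul_nonsing_inv _ (B_unit A hA hsc hbal)
  have hMeq : M = PP n * QQ C :=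
    mp_unique (lap A) M (PP n * QQ C) hM (penrose_M0 A hA hsc hbal C hBC)
  have h00 : QQ C 0 0 = C 0 0 - (∑ k, C 0 k) / ((n:ℝ)+2) := by
    have := QQ_cs_cs C 0 0
    rwa [Fin.castSucc_zero] at this
  have h0l : QQ C 0 (Fin.last (n+1)) = -(∑ k, C 0 k) / ((n:ℝ)+2) := by
    have := QQ_cs_last C 0
    rwa [Fin.castSucc_zero] at this
  have hll : QQ C (Fin.last (n+1)) (Fin.last (n+1)) = 0 := QQ_last C _
  have hS : (∑ k, QQ C k 0) - (∑ k, QQ C k (Fin.last (n+1))) = ∑ k', C k' 0 := by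
    rw [← Finset.sum_sub_distrib, Fin.sum_univ_castSucc, QQ_last, QQ_last, sub_self, add_zero]
    refine Finset.sum_congr rfl ?_
    intro k' _
    have e1 : QQ C (Fin.castSucc k') 0 = C k' 0 - (∑ k, C k' k) / ((n:ℝ)+2) := by
      have := QQ_cs_cs C k' 0
      rwa [Fin.castSucc_zero] at this
    rw [e1, QQ_cs_last]
    ring
  rw [resist, hMeq, PQ_entry, PQ_entry, PQ_entry, h00, h0l, hll]
  linear_combination (-(((n:ℝ)+2)⁻¹)) * hS
end
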